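/- arXiv:0904.2497 — 9 statements merged into one kernel-verified Lean document; each statement's English description precedes it below -/
import Mathlib

section
/- Let Λ ≥ 0 and χ_b > 0. Let R : [0,χ_b] → ℝ be continuously differentiable with R twice continuously differentiable on (0,χ_b], R > 0 on (0,χ_b], R(0) = 0 and R'(0) = 1, and let ν : (0,χ_b] → ℝ be twice continuously differentiable. Define ρ, p, p⊥ and m from R, ν, Λ by the field equations and mass definition, and assume ρ ≥ 0, p ≥ 0 and p + 2p⊥ ≤ ρ on (0,χ_b]. If χ ∈ (0,χ_b] is such that Λ·R(s)² < 1 for all s ∈ (0,χ], then R'(s) = √(1 − 2m(s)/R(s) − Λ·R(s)²/3) > 0 for all s ∈ (0,χ]; in particular R is strictly increasing on [0,χ]. -/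
open Real Set

/-- If `Λ R(s)² < 1` on `(0,χ]` then `R'(s) = √(1 − 2m/R − ΛR²/3) > 0` there,
and in particular the area radius `R` is strictly increasing on `[0,χ]`. -/
theorem radius_strictly_increasing
    (Λ χb : ℝ) (hΛ : 0 ≤ Λ) (hχb : 0 < χb)
    (R ν ρ p pt m : ℝ → ℝ)
    (hR1 : ContDiffOn ℝ 1 R (Icc 0 χb))
    (hR2 : ContDiffOn ℝ 2 R (Ioc 0 χb))
    (hν : ContDiffOn ℝ 2 ν (Ioc 0 χb))
    (hRpos : ∀ χ ∈ Ioc 0 χb, 0 < R χ)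
    (hR0 : R 0 = 0) (hR'0 : deriv R 0 = 1)
    (hρdef : ∀ χ ∈ Ioc 0 χb,
      8 * π * ρ χ =
        (1 - (deriv R χ) ^ 2 - 2 * R χ * deriv (deriv R) χ) / (R χ) ^ 2 - Λ)
    (hpdef : ∀ χ ∈ Ioc 0 χb,
      8 * π * p χ =
        ((deriv R χ) ^ 2 - 1 + 2 * R χ * deriv R χ * deriv ν χ) / (R χ) ^ 2 + Λ)
    (hptdef : ∀ χ ∈ Ioc 0 χb,
      8 * π * pt χ =
        (deriv ν χ * deriv R χ + R χ * ((deriv ν χ) ^ 2 + deriv (deriv ν) χ)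
          + deriv (deriv R) χ) / R χ + Λ)
    (hmdef : ∀ χ ∈ Ioc 0 χb,
      m χ = R χ / 2 * (1 - (deriv R χ) ^ 2) - Λ / 6 * (R χ) ^ 3)
    (hρpos : ∀ χ ∈ Ioc 0 χb, 0 ≤ ρ χ)
    (hppos : ∀ χ ∈ Ioc 0 χb, 0 ≤ p χ)
    (hec : ∀ χ ∈ Ioc 0 χb, p χ + 2 * pt χ ≤ ρ χ) :
    ∀ χ ∈ Ioc 0 χb, (∀ s ∈ Ioc 0 χ, Λ * (R s) ^ 2 < 1) →
      (∀ s ∈ Ioc 0 χ,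
        deriv R s = Real.sqrt (1 - 2 * m s / R s - Λ * (R s) ^ 2 / 3) ∧
        0 < deriv R s) ∧
      StrictMonoOn R (Icc 0 χ) := by
 
  intro χ hχ hΛR
  have hχ0 : 0 < χ := hχ.1
  have hχχb : χ ≤ χb := hχ.2
  -- nonvanishing of deriv R on (0, χ]
  have hne : ∀ s ∈ Ioc 0 χ, deriv R s ≠ 0 := by
    intro s hs hzero
    have hsb : s ∈ Ioc 0 χb := ⟨hs.1, hs.2.trans hχχb⟩
    have hp := hpdef s hsb
    rw [hzero] at hp
    have hRs := hRpos s hsb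
    have hΛs := hΛR s hs
    have h8 : 8 * π * p s = (Λ * (R s) ^ 2 - 1) / (R s) ^ 2 := by
      rw [hp]; field_simp; ring
    have hneg : 8 * π * p s < 0 := by
      rw [h8]
      exact div_neg_of_neg_of_pos (by linarith) (by positivity)
    have hpp := hppos s hsb
    nlinarith [pi_pos]
  set f := derivWithin R (Icc 0 χb) with hf
  have hfc : ContinuousOn f (Icc 0 χb) :=
    hR1.continuousOn_derivWithin (uniqueDiffOn_Icc hχb) le_rfl
  have hfeq : ∀ x ∈ Icc 0 χ, f x = deriv R x := by
    intro x hx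
    rcases eq_or_lt_of_le hx.1 with h0 | h0
    · subst h0
      have hdiff : DifferentiableAt ℝ R 0 := by
        by_contra h
        rw [deriv_zero_of_not_differentiableAt h] at hR'0
        norm_num at hR'0
      exact hdiff.derivWithin ((uniqueDiffOn_Icc hχb) 0 ⟨le_rfl, hχb.le⟩)
    · rcases lt_or_eq_of_le (hx.2.trans hχχb) with hlt | heq
      · exact derivWithin_of_mem_nhds (Icc_mem_nhds h0 hlt)
      · have hdiff : DifferentiableAt ℝ R x := by
          by_contra h
          exact hne x ⟨h0, hx.2⟩ (deriv_zero_of_not_differentiableAt h)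
        exact hdiff.derivWithin ((uniqueDiffOn_Icc hχb) x ⟨hx.1, le_of_eq heq⟩)
  have hf0 : f 0 = 1 := by
    rw [hfeq 0 ⟨le_rfl, hχ0.le⟩, hR'0]
  have hpos : ∀ s ∈ Ioc 0 χ, 0 < deriv R s := by
    intro s hs
    by_contra hle
    push_neg at hle
    have hlt : deriv R s < 0 := lt_of_le_of_ne hle (hne s hs)
    have hsub : Icc 0 s ⊆ Icc 0 χb := Icc_subset_Icc le_rfl (hs.2.trans hχχb)
    have hc : ContinuousOn f (Icc 0 s) := hfc.mono hsub
    have hmem : (0 : ℝ) ∈ Icc (f s) (f 0) := by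
      constructor
      · rw [hfeq s ⟨hs.1.le, hs.2⟩]; exact hlt.le
      · rw [hf0]; norm_num
    obtain ⟨t, ht, hft⟩ := intermediate_value_Icc' hs.1.le hc hmem
    have ht0 : 0 < t := by
      rcases lt_or_eq_of_le ht.1 with h | h
      · exact h
      · rw [← h, hf0] at hft; norm_num at hft
    have : deriv R t = 0 := by
      rw [← hfeq t ⟨ht.1, ht.2.trans hs.2⟩]; exact hft
    exact hne t ⟨ht0, ht.2.trans hs.2⟩ this
  constructor
  · intro s hs
    have hsb : s ∈ Ioc 0 χb := ⟨hs.1, hs.2.trans hχχb⟩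
    have hRs := hRpos s hsb
    have key : 1 - 2 * m s / R s - Λ * (R s) ^ 2 / 3 = (deriv R s) ^ 2 := by
      rw [hmdef s hsb]; field_simp; ring
    refine ⟨?_, hpos s hs⟩
    rw [key, Real.sqrt_sq (hpos s hs).le]
  · have hRc : ContinuousOn R (Icc 0 χ) :=
      hR1.continuousOn.mono (Icc_subset_Icc le_rfl hχχb)
    refine strictMonoOn_of_deriv_pos (convex_Icc 0 χ) hRc ?_
    intro x hx
    rw [interior_Icc] at hx
    exact hpos x ⟨hx.1, hx.2.le⟩
end

section
/- Let X and z be real numbers with 0 ≤ z < 1 and X ≤ 2/9 − z/3 + (2/9)·√(1 + 3z). Then 2X + z/3 < 1. -/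
open Real

/-- Algebraic content of Corollary 1: if `0 ≤ z < 1` and
`X ≤ 2/9 − z/3 + (2/9)√(1 + 3z)`, then `2X + z/3 < 1`. -/
theorem compactness_bound_implies_positivity
    (X z : ℝ) (hz0 : 0 ≤ z) (hz1 : z < 1)
    (hX : X ≤ 2 / 9 - z / 3 + 2 / 9 * Real.sqrt (1 + 3 * z)) :
    2 * X + z / 3 < 1 := by
  have h : Real.sqrt (1 + 3 * z) < (5 + 3 * z) / 4 := by
    rw [show (5 + 3 * z) / 4 = |(5 + 3 * z) / 4| by rw [abs_of_pos]; nlinarith]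
    rw [← Real.sqrt_sq_eq_abs]
    apply Real.sqrt_lt_sqrt (by nlinarith)
    nlinarith
  nlinarith
end

section
/- Let x, y, z be real numbers with 0 ≤ x < 1, y ≥ 0, 0 ≤ z ≤ 1, and suppose u(x,y,z) := 3x² + (y−z)² − 2(x−y) + 2z(3−4x) ≤ 0. Then w(x,y,z) := (3(1−x) + 1 + y − z)²/(1−x) satisfies w(x,y,z) ≤ 16 − 9x² − 24z(1−x) − 8z ≤ 16, and w(x,y,z) = 16 holds if and only if x = y = z = 0. -/
/-- Solution of the optimization problem in the proof of Theorem 1: on the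
constraint region `{0 ≤ x < 1, y ≥ 0, 0 ≤ z ≤ 1, u(x,y,z) ≤ 0}` the comparison
function `w(x,y,z) = (3(1−x)+1+y−z)²/(1−x)` satisfies
`w ≤ 16 − 9x² − 24z(1−x) − 8z ≤ 16`, with `w = 16` iff `x = y = z = 0`. -/
theorem optimization_w_le_16
    (x y z : ℝ) (hx0 : 0 ≤ x) (hx1 : x < 1) (hy : 0 ≤ y)
    (hz0 : 0 ≤ z) (hz1 : z ≤ 1)
    (hu : 3 * x ^ 2 + (y - z) ^ 2 - 2 * (x - y) + 2 * z * (3 - 4 * x) ≤ 0) :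
    (3 * (1 - x) + 1 + y - z) ^ 2 / (1 - x) ≤ 16 - 9 * x ^ 2 - 24 * z * (1 - x) - 8 * z ∧
    16 - 9 * x ^ 2 - 24 * z * (1 - x) - 8 * z ≤ 16 ∧
    ((3 * (1 - x) + 1 + y - z) ^ 2 / (1 - x) = 16 ↔ x = 0 ∧ y = 0 ∧ z = 0) := by
  have h1x : (0:ℝ) < 1 - x := by linarith
  have key : (3 * (1 - x) + 1 + y - z) ^ 2 ≤
      (16 - 9 * x ^ 2 - 24 * z * (1 - x) - 8 * z) * (1 - x) := by
    nlinarith [sq_nonneg (y - z), sq_nonneg (x - z), sq_nonneg (x + y - z),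
      mul_nonneg hx0 hz0, mul_nonneg hx0 hy, mul_nonneg hy hz0,
      mul_nonneg (mul_nonneg hx0 hx0) hz0, mul_nonneg (mul_nonneg hx0 hx0) hx0,
      mul_nonneg h1x.le hz0, mul_nonneg h1x.le hy, mul_nonneg (mul_nonneg h1x.le hx0) hz0,
      sq_nonneg (y - z + x)]
  have h1 : (3 * (1 - x) + 1 + y - z) ^ 2 / (1 - x) ≤
      16 - 9 * x ^ 2 - 24 * z * (1 - x) - 8 * z := (div_le_iff₀ h1x).mpr key
  have h2 : 16 - 9 * x ^ 2 - 24 * z * (1 - x) - 8 * z ≤ 16 := by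
    nlinarith [sq_nonneg x, mul_nonneg hz0 h1x.le]
  refine ⟨h1, h2, ?_, ?_⟩
  · intro h
    have hx : x = 0 := by nlinarith [mul_nonneg hz0 h1x.le]
    have hz : z = 0 := by nlinarith [mul_nonneg hz0 h1x.le]
    subst hx hz
    have : (3 * (1 - 0) + 1 + y - 0) ^ 2 = 16 := by
      field_simp at h; linarith [h]
    have hy0 : y = 0 := by nlinarith
    exact ⟨rfl, hy0, rfl⟩
  · rintro ⟨rfl, rfl, rfl⟩
    norm_num
end

section
/- Let I ⊆ ℝ be an interval and let x, y, z : I → ℝ be differentiable with 0 ≤ x(t) < 1, y(t) ≥ 0, 0 ≤ z(t) ≤ 1 and z'(t) = z(t) for all t ∈ I. Suppose the energy-condition inequality y + x'·(x + y − z)/(1 − x) + 2y' + (x + y − z)²/(2(1 − x)) ≤ 2x' + x − z holds pointwise on I. Then w(t) := (4 − 3x + y − z)²/(1 − x) satisfies w'(t) ≤ −[(4 − 3x + y − z)/(2(1 − x)²)]·u(x,y,z) pointwise, where u(x,y,z) = 3x² + (y−z)² − 2(x−y) + 2z(3−4x). In particular w'(t) ≤ 0 at every t where u(x(t),y(t),z(t))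 > 0. -/
open Set

/-- The energy-condition differential inequality implies the decay estimate for
the comparison function `w = (4 − 3x + y − z)²/(1 − x)`:
`w' ≤ −[(4 − 3x + y − z)/(2(1 − x)²)]·u(x,y,z)`, where
`u(x,y,z) = 3x² + (y−z)² − 2(x−y) + 2z(3−4x)`; in particular `w' ≤ 0`
wherever `u > 0`. -/
theorem comparison_function_decreasing
    (I : Set ℝ) (hI : I.OrdConnected)
    (x y z : ℝ → ℝ)
    (hx : ∀ t ∈ I, DifferentiableAt ℝ x t)
    (hy : ∀ t ∈ I, DifferentiableAt ℝ y t)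
    (hz : ∀ t ∈ I, DifferentiableAt ℝ z t)
    (hx01 : ∀ t ∈ I, 0 ≤ x t ∧ x t < 1)
    (hy0 : ∀ t ∈ I, 0 ≤ y t)
    (hz01 : ∀ t ∈ I, 0 ≤ z t ∧ z t ≤ 1)
    (hzode : ∀ t ∈ I, deriv z t = z t)
    (hec : ∀ t ∈ I,
      y t + deriv x t * (x t + y t - z t) / (1 - x t) + 2 * deriv y t
          + (x t + y t - z t) ^ 2 / (2 * (1 - x t)) ≤
        2 * deriv x t + x t - z t) :
    ∀ t ∈ I,
      (deriv (fun s => (4 - 3 * x s + y s - z s) ^ 2 / (1 - x s)) t ≤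
        -((4 - 3 * x t + y t - z t) / (2 * (1 - x t) ^ 2)) *
          (3 * (x t) ^ 2 + (y t - z t) ^ 2 - 2 * (x t - y t)
            + 2 * z t * (3 - 4 * x t))) ∧
      (0 < 3 * (x t) ^ 2 + (y t - z t) ^ 2 - 2 * (x t - y t)
            + 2 * z t * (3 - 4 * x t) →
        deriv (fun s => (4 - 3 * x s + y s - z s) ^ 2 / (1 - x s)) t ≤ 0) := by
  intro t ht
  obtain ⟨hx0, hx1⟩ := hx01 t ht
  obtain ⟨hz0, hz1⟩ := hz01 t ht
  have hy0t := hy0 t ht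
  have h1x : (0:ℝ) < 1 - x t := by linarith
  have hc : (0:ℝ) < (1 - x t) ^ 2 := by positivity
  have hdx := (hx t ht).hasDerivAt
  have hdy := (hy t ht).hasDerivAt
  have hdz := (hz t ht).hasDerivAt
  rw [hzode t ht] at hdz
  set dx := deriv x t with hdxdef
  set dy := deriv y t with hdydef
  set N := 4 - 3 * x t + y t - z t with hNdef
  set u := 3 * (x t) ^ 2 + (y t - z t) ^ 2 - 2 * (x t - y t)
            + 2 * z t * (3 - 4 * x t) with hudef
  have hN0 : 0 < N := by rw [hNdef]; linarith
  -- derivative of the numerator base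
  have hA : HasDerivAt (fun s => 4 - 3 * x s + y s - z s)
      (-(3 * dx) + dy - z t) t := by
    exact (((hdx.const_mul 3).const_sub 4).add hdy).sub hdz
  have hNum : HasDerivAt (fun s => (4 - 3 * x s + y s - z s) ^ 2)
      (2 * N * (-(3 * dx) + dy - z t)) t := by
    have := hA.pow 2
    simpa [Pi.pow_def, hNdef, mul_comm, mul_assoc, mul_left_comm] using this
  have hDen : HasDerivAt (fun s => 1 - x s) (-dx) t := hdx.const_sub 1
  have hw : HasDerivAt (fun s => (4 - 3 * x s + y s - z s) ^ 2 / (1 - x s))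
      ((2 * N * (-(3 * dx) + dy - z t) * (1 - x t) - N ^ 2 * (-dx)) /
        (1 - x t) ^ 2) t := hNum.div hDen (ne_of_gt h1x)
  -- multiply the energy condition by (1 - x t)
  have hec' := hec t ht
  have e1 : dx * (x t + y t - z t) / (1 - x t) * (1 - x t)
      = dx * (x t + y t - z t) := div_mul_cancel₀ _ (ne_of_gt h1x)
  have e2 : (x t + y t - z t) ^ 2 / (2 * (1 - x t)) * (1 - x t)
      = (x t + y t - z t) ^ 2 / 2 := by
    field_simp
  have h := mul_le_mul_of_nonneg_right hec' h1x.le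
  rw [add_mul, add_mul, add_mul, e1, e2] at h
  -- key scalar inequality
  have key : 2 * (-(3 * dx) + dy - z t) * (1 - x t) + N * dx + u / 2 ≤ 0 := by
    rw [hNdef, hudef]; linarith
  have key2 : N * (2 * (-(3 * dx) + dy - z t) * (1 - x t) + N * dx + u / 2)
      ≤ N * 0 := mul_le_mul_of_nonneg_left key hN0.le
  have goal1 : 2 * N * (-(3 * dx) + dy - z t) * (1 - x t) - N ^ 2 * (-dx)
      ≤ -(N * u / 2) := by nlinarith [key2]
  have part1 : deriv (fun s => (4 - 3 * x s + y s - z s) ^ 2 / (1 - x s)) t ≤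
      -(N / (2 * (1 - x t) ^ 2)) * u := by
    rw [hw.deriv]
    calc (2 * N * (-(3 * dx) + dy - z t) * (1 - x t) - N ^ 2 * (-dx)) /
          (1 - x t) ^ 2
        ≤ (-(N * u / 2)) / (1 - x t) ^ 2 := by
          gcongr
      _ = -(N / (2 * (1 - x t) ^ 2)) * u := by
          field_simp
  refine ⟨part1, fun hu => ?_⟩
  have hq : 0 ≤ N / (2 * (1 - x t) ^ 2) := by positivity
  linarith [part1, mul_nonneg hq hu.le]
end

section
/- Let Λ ∈ ℝ, let R, ν be twice continuously differentiable real functions on an interval I, and define ρ, p, p⊥ and m from R, ν, Λ by the field equations and mass definition. Then at every χ ∈ I with R(χ) > 0 and R'(χ) ≠ 0, the generalized Tolman–Oppenheimer–Volkov equation holds: p'(χ) = −(ρ + p)·(4πp + m/R³ − Λ/3)·R/R' − 2·(R'/R)·(p − p⊥), all quantities evaluated at χ. -/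
open Real Set

/-- The generalized Tolman–Oppenheimer–Volkov equation: for `R, ν` twice
continuously differentiable on an open interval `I`, with `ρ, p, p⊥, m` defined
from `R, ν, Λ` by the field equations and the mass definition, at every point
of `I` with `R > 0` and `R' ≠ 0` one has
`p' = −(ρ + p)(4πp + m/R³ − Λ/3)·R/R' − 2(R'/R)(p − p⊥)`. -/
theorem generalized_TOV
    (Λ : ℝ) (I : Set ℝ) (hIopen : IsOpen I) (hIord : I.OrdConnected)
    (R ν ρ p pt m : ℝ → ℝ)
    (hR : ContDiffOn ℝ 2 R I) (hν : ContDiffOn ℝ 2 ν I)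
    (hρdef : ∀ χ ∈ I,
      8 * π * ρ χ =
        (1 - (deriv R χ) ^ 2 - 2 * R χ * deriv (deriv R) χ) / (R χ) ^ 2 - Λ)
    (hpdef : ∀ χ ∈ I,
      8 * π * p χ =
        ((deriv R χ) ^ 2 - 1 + 2 * R χ * deriv R χ * deriv ν χ) / (R χ) ^ 2 + Λ)
    (hptdef : ∀ χ ∈ I,
      8 * π * pt χ =
        (deriv ν χ * deriv R χ + R χ * ((deriv ν χ) ^ 2 + deriv (deriv ν) χ)
          + deriv (deriv R) χ) / R χ + Λ)
    (hmdef : ∀ χ ∈ I,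
      m χ = R χ / 2 * (1 - (deriv R χ) ^ 2) - Λ / 6 * (R χ) ^ 3) :
    ∀ χ ∈ I, 0 < R χ → deriv R χ ≠ 0 →
      deriv p χ =
        -(ρ χ + p χ) * (4 * π * p χ + m χ / (R χ) ^ 3 - Λ / 3) * (R χ / deriv R χ)
          - 2 * (deriv R χ / R χ) * (p χ - pt χ) := by
  intro χ hχ hRpos hR1ne
  have hπ : (π : ℝ) ≠ 0 := Real.pi_ne_zero
  have hRne : R χ ≠ 0 := ne_of_gt hRpos
  -- differentiability facts
  have hRd : ContDiffOn ℝ 1 (deriv R) I := hR.deriv_of_isOpen hIopen (by norm_num)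
  have hνd : ContDiffOn ℝ 1 (deriv ν) I := hν.deriv_of_isOpen hIopen (by norm_num)
  have hR1 : HasDerivAt R (deriv R χ) χ :=
    ((hR.differentiableOn (by norm_num)).differentiableAt (hIopen.mem_nhds hχ)).hasDerivAt
  have hR2 : HasDerivAt (deriv R) (deriv (deriv R) χ) χ :=
    ((hRd.differentiableOn (by norm_num)).differentiableAt (hIopen.mem_nhds hχ)).hasDerivAt
  have hν2 : HasDerivAt (deriv ν) (deriv (deriv ν) χ) χ :=
    ((hνd.differentiableOn (by norm_num)).differentiableAt (hIopen.mem_nhds hχ)).hasDerivAt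
  set r := R χ with hr
  set r1 := deriv R χ with hr1
  set r2 := deriv (deriv R) χ with hr2v
  set n1 := deriv ν χ with hn1
  set n2 := deriv (deriv ν) χ with hn2v
  -- the function g agreeing with p on I
  set g : ℝ → ℝ := fun x =>
    (((deriv R x) ^ 2 - 1 + 2 * R x * deriv R x * deriv ν x) / (R x) ^ 2 + Λ) / (8 * π)
    with hg
  have hpg : deriv p χ = deriv g χ := by
    apply Filter.EventuallyEq.deriv_eq
    filter_upwards [hIopen.mem_nhds hχ] with x hx
    have := hpdef x hx
    simp only [hg]; rw [eq_div_iff (by positivity)]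
    linarith [hpdef x hx]
  -- derivative of the numerator
  have hν1 : HasDerivAt ν n1 χ :=
    ((hν.differentiableOn (by norm_num)).differentiableAt (hIopen.mem_nhds hχ)).hasDerivAt
  have hA : HasDerivAt (fun x => (deriv R x) ^ 2 - 1 + 2 * R x * deriv R x * deriv ν x)
      ((2 * r1 * r2) + ((2 * r1 * r1 + 2 * r * r2) * n1 + 2 * r * r1 * n2)) χ := by
    have h1 : HasDerivAt (fun x => (deriv R x) ^ 2 - 1) (2 * r1 * r2) χ := by
      have := (hR2.pow 2).sub_const 1
      simpa [hr1, hr2v, mul_comm, mul_assoc, mul_left_comm] using this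
    have h2 : HasDerivAt (fun x => 2 * R x * deriv R x * deriv ν x)
        ((2 * r1 * r1 + 2 * r * r2) * n1 + 2 * r * r1 * n2) χ := by
      have hb : HasDerivAt (fun x => 2 * R x * deriv R x) (2 * r1 * r1 + 2 * r * r2) χ := by
        have := (hR1.const_mul 2).mul hR2
        simpa [Pi.mul_def, hr, hr1, hr2v, mul_comm, mul_assoc, mul_left_comm] using this
      simpa [Pi.mul_def] using hb.mul hν2
    exact h1.add h2
  have hB : HasDerivAt (fun x => (R x) ^ 2) (2 * r * r1) χ := by
    have := hR1.pow 2
    simpa [Pi.pow_def, hr, hr1, mul_comm, mul_assoc, mul_left_comm] using this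
  have hBne : r ^ 2 ≠ 0 := pow_ne_zero 2 hRne
  have hgd : HasDerivAt g
      (((((2 * r1 * r2) + ((2 * r1 * r1 + 2 * r * r2) * n1 + 2 * r * r1 * n2)) * r ^ 2
        - (r1 ^ 2 - 1 + 2 * r * r1 * n1) * (2 * r * r1)) / (r ^ 2) ^ 2) / (8 * π)) χ := by
    have := ((hA.div hB hBne).add_const Λ).div_const (8 * π)
    simpa [hg, hr, hr1, hn1] using this
  have hderiv : deriv g χ =
      ((((2 * r1 * r2) + ((2 * r1 * r1 + 2 * r * r2) * n1 + 2 * r * r1 * n2)) * r ^ 2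
        - (r1 ^ 2 - 1 + 2 * r * r1 * n1) * (2 * r * r1)) / (r ^ 2) ^ 2) / (8 * π) :=
    hgd.deriv
  rw [hpg, hderiv]
  -- express ρ, p, pt, m
  have hρ : ρ χ = ((1 - r1 ^ 2 - 2 * r * r2) / r ^ 2 - Λ) / (8 * π) := by
    have := hρdef χ hχ; rw [eq_div_iff (by positivity), mul_comm]; exact this
  have hp : p χ = ((r1 ^ 2 - 1 + 2 * r * r1 * n1) / r ^ 2 + Λ) / (8 * π) := by
    have := hpdef χ hχ; rw [eq_div_iff (by positivity), mul_comm]; exact this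
  have hpt : pt χ = ((n1 * r1 + r * (n1 ^ 2 + n2) + r2) / r + Λ) / (8 * π) := by
    have := hptdef χ hχ; rw [eq_div_iff (by positivity), mul_comm]; exact this
  have hm : m χ = r / 2 * (1 - r1 ^ 2) - Λ / 6 * r ^ 3 := hmdef χ hχ
  rw [hρ, hp, hpt, hm]
  field_simp
  ring
end

section
/- Let Λ ∈ ℝ, let R, ν be twice continuously differentiable real functions on an interval I, and define ρ, p, p⊥ and m from R, ν, Λ by the field equations and mass definition. Define Γ(χ) = (4π p R³ + m − (Λ/3)R³)·e^ν / R'. Then at every χ ∈ I with R(χ) > 0 and R'(χ) ≠ 0, Γ'(χ) = (4π(ρ + p + 2p⊥)R² − ΛR²)·e^ν, all quantities evaluated at χ. -/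
open Real Set

/-- Derivative of the auxiliary function `Γ = (4πpR³ + m − (Λ/3)R³)·e^ν / R'`:
for `R, ν` twice continuously differentiable on an open interval `I`, with
`ρ, p, p⊥, m` defined from `R, ν, Λ` by the field equations and the mass
definition, at every point of `I` with `R > 0` and `R' ≠ 0` one has
`Γ' = (4π(ρ + p + 2p⊥)R² − ΛR²)·e^ν`. -/
theorem Gamma_derivative
    (Λ : ℝ) (I : Set ℝ) (hIopen : IsOpen I) (hIord : I.OrdConnected)
    (R ν ρ p pt m : ℝ → ℝ)
    (hR : ContDiffOn ℝ 2 R I) (hν : ContDiffOn ℝ 2 ν I)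
    (hρdef : ∀ χ ∈ I,
      8 * π * ρ χ =
        (1 - (deriv R χ) ^ 2 - 2 * R χ * deriv (deriv R) χ) / (R χ) ^ 2 - Λ)
    (hpdef : ∀ χ ∈ I,
      8 * π * p χ =
        ((deriv R χ) ^ 2 - 1 + 2 * R χ * deriv R χ * deriv ν χ) / (R χ) ^ 2 + Λ)
    (hptdef : ∀ χ ∈ I,
      8 * π * pt χ =
        (deriv ν χ * deriv R χ + R χ * ((deriv ν χ) ^ 2 + deriv (deriv ν) χ)
          + deriv (deriv R) χ) / R χ + Λ)
    (hmdef : ∀ χ ∈ I,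
      m χ = R χ / 2 * (1 - (deriv R χ) ^ 2) - Λ / 6 * (R χ) ^ 3) :
    ∀ χ ∈ I, 0 < R χ → deriv R χ ≠ 0 →
      deriv (fun χ =>
          (4 * π * p χ * (R χ) ^ 3 + m χ - Λ / 3 * (R χ) ^ 3) * Real.exp (ν χ)
            / deriv R χ) χ =
        (4 * π * (ρ χ + p χ + 2 * pt χ) * (R χ) ^ 2 - Λ * (R χ) ^ 2)
          * Real.exp (ν χ) := by
  intro χ₀ hχ₀ hRpos hR'ne
  have hmem : I ∈ nhds χ₀ := hIopen.mem_nhds hχ₀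
  have hRd1 : ContDiffOn ℝ 1 (deriv R) I := hR.deriv_of_isOpen hIopen (by norm_num)
  have hνd1 : ContDiffOn ℝ 1 (deriv ν) I := hν.deriv_of_isOpen hIopen (by norm_num)
  have hRcont : ContinuousAt R χ₀ := hR.continuousOn.continuousAt hmem
  have hR'cont : ContinuousAt (deriv R) χ₀ := hRd1.continuousOn.continuousAt hmem
  have h1 : ∀ᶠ χ in nhds χ₀, 0 < R χ :=
    hRcont.eventually_mem (isOpen_Ioi.mem_nhds hRpos)
  have h2 : ∀ᶠ χ in nhds χ₀, deriv R χ ≠ 0 :=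
    hR'cont.eventually_mem (isOpen_compl_singleton.mem_nhds hR'ne)
  have heq : (fun χ =>
      (4 * π * p χ * (R χ) ^ 3 + m χ - Λ / 3 * (R χ) ^ 3) * Real.exp (ν χ)
        / deriv R χ)
      =ᶠ[nhds χ₀] fun χ => (R χ) ^ 2 * deriv ν χ * Real.exp (ν χ) := by
    filter_upwards [hmem, h1, h2] with χ hχ hRp hR'n
    have hRne : R χ ≠ 0 := ne_of_gt hRp
    have hp := hpdef χ hχ
    have hm := hmdef χ hχ
    have hp' : 8 * π * p χ * (R χ) ^ 2 =
        (deriv R χ) ^ 2 - 1 + 2 * R χ * deriv R χ * deriv ν χ + Λ * (R χ) ^ 2 := by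
      rw [hp]; field_simp; try ring
    rw [div_eq_iff hR'n]
    linear_combination (Real.exp (ν χ) * R χ / 2) * hp' + Real.exp (ν χ) * hm
  rw [heq.deriv_eq]
  have hRdiff : HasDerivAt R (deriv R χ₀) χ₀ :=
    ((hR.contDiffAt hmem).differentiableAt (by norm_num)).hasDerivAt
  have hνdiff : HasDerivAt ν (deriv ν χ₀) χ₀ :=
    ((hν.contDiffAt hmem).differentiableAt (by norm_num)).hasDerivAt
  have hν'' : HasDerivAt (deriv ν) (deriv (deriv ν) χ₀) χ₀ :=
    ((hνd1.contDiffAt hmem).differentiableAt (by norm_num)).hasDerivAt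
  have hg : HasDerivAt (fun χ => (R χ) ^ 2 * deriv ν χ * Real.exp (ν χ))
      ((2 * R χ₀ ^ 1 * deriv R χ₀ * deriv ν χ₀ + (R χ₀) ^ 2 * deriv (deriv ν) χ₀)
          * Real.exp (ν χ₀)
        + (R χ₀) ^ 2 * deriv ν χ₀ * (Real.exp (ν χ₀) * deriv ν χ₀)) χ₀ :=
    ((hRdiff.pow 2).mul hν'').mul hνdiff.exp
  rw [hg.deriv]
  have hRne : R χ₀ ≠ 0 := ne_of_gt hRpos
  have hρ := hρdef χ₀ hχ₀
  have hp := hpdef χ₀ hχ₀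
  have hpt := hptdef χ₀ hχ₀
  have hρ' : 8 * π * ρ χ₀ * (R χ₀) ^ 2 =
      1 - (deriv R χ₀) ^ 2 - 2 * R χ₀ * deriv (deriv R) χ₀ - Λ * (R χ₀) ^ 2 := by
    rw [hρ]; field_simp; try ring
  have hp' : 8 * π * p χ₀ * (R χ₀) ^ 2 =
      (deriv R χ₀) ^ 2 - 1 + 2 * R χ₀ * deriv R χ₀ * deriv ν χ₀ + Λ * (R χ₀) ^ 2 := by
    rw [hp]; field_simp; try ring
  have hpt' : 8 * π * pt χ₀ * R χ₀ =
      deriv ν χ₀ * deriv R χ₀ + R χ₀ * ((deriv ν χ₀) ^ 2 + deriv (deriv ν) χ₀)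
        + deriv (deriv R) χ₀ + Λ * R χ₀ := by
    rw [hpt]; field_simp; try ring
  linear_combination (-Real.exp (ν χ₀) / 2) * hρ' + (-Real.exp (ν χ₀) / 2) * hp'
    - (Real.exp (ν χ₀) * R χ₀) * hpt'
end

section
/- Let Λ > 0, χ₁ > 0 and R₁ > 0 with 0 < Λ·R₁² < 1. Under the same hypotheses on the sequence (R_k, ν_k) of solutions approaching an infinitely thin shell (regular centre; ρ_k ≥ 0, p_k ≥ 0, p_k + 2(p⊥)_k ≤ ρ_k; matter supported in [χ₀^k, χ₁] with χ₀^k → χ₁; sup_k sup_χ R_k² p_k < ∞; ∫_{χ₀^k}^{χ₁}(ρ_k − 2(p⊥)_k)R_k² dχ → 0; R_k(χ₁) = R₁, R_k(χ₀^k) → R₁; e^{ν_k(χ₁)} = √(1 − 2M_k/R₁ − ΛR₁²/3) with M_k := m_k(χ₁) → M), the strict inequality M/R₁ < 2/9 − Λ·R₁²/3 + (2/9)·√(1 + 3Λ·R₁²) holds; that is, infinitely thin shells do not saturate the compactness bound when 0 < ΛR₁² < 1. -/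
open Real Set Filter Topology MeasureTheory intervalIntegral

set_option maxHeartbeats 1600000

theorem nonneg_factor {c x : ℝ} (hc : 0 < c) (h : 0 ≤ c * x) : 0 ≤ x := by
  by_contra hcon
  push_neg at hcon
  nlinarith [mul_pos hc (neg_pos.mpr hcon)]

theorem nonneg_factor' {c x : ℝ} (hc : 0 < c) (h : 0 ≤ c * x) : 0 ≤ x := by
  by_contra hcon
  push_neg at hcon
  nlinarith [mul_pos hc (neg_pos.mpr hcon)]

theorem final_algebra (x Mr v u : ℝ) (hx0 : 0 < x) (hx1 : x < 1)
    (hu : u = Real.sqrt (1 - x/3)) (hv : v = Real.sqrt (1 - 2*Mr - x/3))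
    (hV0 : 0 ≤ 1 - 2*Mr - x/3)
    (hineq : 0 ≤ -(1 - v^2 - x) - 4*v^2 + v*(1/(3*u))*(12-6*x)) :
    Mr < 2/9 - x/3 + 2/9*Real.sqrt (1+3*x) := by
  have hu0 : 0 < u := by
    rw [hu]; exact Real.sqrt_pos.mpr (by linarith)
  have hu2 : u^2 = 1 - x/3 := by rw [hu]; exact Real.sq_sqrt (by linarith)
  have hv0 : 0 ≤ v := by rw [hv]; exact Real.sqrt_nonneg _
  have hv2 : v^2 = 1 - 2*Mr - x/3 := by rw [hv]; exact Real.sq_sqrt hV0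
  have h3u : (0:ℝ) < 3*u := by linarith
  have h2 : (1-x) + 3*v^2 ≤ v*(1/(3*u))*(12-6*x) := by linarith only [hineq]
  have hid : v*(1/(3*u))*(12-6*x)*(3*u) = (12-6*x)*v := by
    field_simp
  have h3 : ((1-x) + 3*v^2)*(3*u) ≤ (12-6*x)*v := by
    have h3' := mul_le_mul_of_nonneg_right h2 h3u.le
    rwa [hid] at h3'
  have h5 := mul_le_mul_of_nonneg_right h3 hu0.le
  have h4 : (3*u*v)^2 - (4-2*x)*(3*u*v) + (3-x)*(1-x) ≤ 0 := by
    nlinarith only [h5, hu2]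
  have h6 : 1 - x ≤ 3*u*v := by
    by_contra hcon
    push_neg at hcon
    have t1 : 0 < (1-x) - 3*u*v := by linarith
    have t2 : 0 < (3-x) - 3*u*v := by linarith
    nlinarith only [mul_pos t1 t2, h4]
  have h7 : (1-x)^2 ≤ (3*u*v)^2 := by
    have := pow_le_pow_left₀ (by linarith : (0:ℝ) ≤ 1-x) h6 2
    exact this
  have h8 : (1-x)^2 ≤ 3*(3-x)*v^2 := by
    have heq : (3*u*v)^2 = 3*(3-x)*v^2 := by linear_combination (9*v^2)*hu2
    linarith only [h7, heq]
  have h3x : (0:ℝ) < 3*(3-x) := by linarith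
  have hDle : (1-x)^2/(3*(3-x)) ≤ v^2 := by
    rw [div_le_iff₀ h3x]
    linarith only [h8]
  have h9 : 2*Mr ≤ 1 - x/3 - (1-x)^2/(3*(3-x)) := by
    linarith only [hv2, hDle]
  -- final strict inequality via t = sqrt(1+3x)
  set t := Real.sqrt (1+3*x) with ht
  have ht0 : 0 < t := by rw [ht]; exact Real.sqrt_pos.mpr (by linarith)
  have ht2 : t^2 = 1+3*x := by rw [ht]; exact Real.sq_sqrt (by linarith)
  have hq : 6+5*x-3*x^2 < 2*t*(3-x) := by
    have hA : 0 < 2*t*(3-x) := mul_pos (by linarith only [ht0]) (by linarith only [hx1])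
    have hB : 0 < 6+5*x-3*x^2 := by
      have hx2 : x^2 ≤ x := by nlinarith only [mul_nonneg hx0.le (by linarith only [hx1] : (0:ℝ) ≤ 1-x)]
      linarith only [hx2, hx0, hx1]
    have hd : (2*t*(3-x))^2 - (6+5*x-3*x^2)^2 = 3*x*(1-x)^2*(8-3*x) := by
      linear_combination (4*(3-x)^2)*ht2
    by_contra hcon
    push_neg at hcon
    have hsq : (2*t*(3-x))^2 ≤ (6+5*x-3*x^2)^2 := pow_le_pow_left₀ hA.le hcon 2
    have hpos : 0 < 3*x*(1-x)^2*(8-3*x) := by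
      have w1 : (0:ℝ) < 3*x := by linarith
      have w2 : (0:ℝ) < (1-x)^2 := by
        have : (1:ℝ) - x ≠ 0 := by linarith
        positivity
      have w3 : (0:ℝ) < 8-3*x := by linarith
      exact mul_pos (mul_pos w1 w2) w3
    linarith only [hsq, hd, hpos]
  have hiden : (1 - x/3 - (1-x)^2/(3*(3-x)))/2 = 2/9 - x/3 + (6+5*x-3*x^2)/(9*(3-x)) := by
    have h3ne : (3:ℝ)-x ≠ 0 := by linarith
    field_simp
    ring
  have hq2 : (6+5*x-3*x^2)/(9*(3-x)) < 2/9*t := by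
    rw [div_lt_iff₀ (by linarith : (0:ℝ) < 9*(3-x))]
    nlinarith only [hq, ht0]
  linarith only [h9, hiden, hq2]

section Key

variable (Λ χ₁ R₁ a C : ℝ) (R ν ρ p pt : ℝ → ℝ)

theorem key
    (hΛ : 0 < Λ) (hR₁ : 0 < R₁) (hΛR : Λ * R₁ ^ 2 < 1)
    (ha0 : 0 < a) (hab : a < χ₁)
    (hR1 : ContDiffOn ℝ 1 R (Icc 0 χ₁))
    (hR2 : ContDiffOn ℝ 2 R (Ioc 0 χ₁))
    (hν2 : ContDiffOn ℝ 2 ν (Ioc 0 χ₁))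
    (hRpos : ∀ χ ∈ Ioc 0 χ₁, 0 < R χ)
    (hR0 : R 0 = 0) (hR'0 : deriv R 0 = 1)
    (hρdef : ∀ χ ∈ Ioc 0 χ₁,
      8 * π * ρ χ = (1 - (deriv R χ) ^ 2 - 2 * R χ * deriv (deriv R) χ) / (R χ) ^ 2 - Λ)
    (hpdef : ∀ χ ∈ Ioc 0 χ₁,
      8 * π * p χ = ((deriv R χ) ^ 2 - 1 + 2 * R χ * deriv R χ * deriv ν χ) / (R χ) ^ 2 + Λ)
    (hptdef : ∀ χ ∈ Ioc 0 χ₁,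
      8 * π * pt χ = (deriv ν χ * deriv R χ + R χ * ((deriv ν χ) ^ 2 + deriv (deriv ν) χ)
        + deriv (deriv R) χ) / R χ + Λ)
    (hρpos : ∀ χ ∈ Ioc 0 χ₁, 0 ≤ ρ χ)
    (hppos : ∀ χ ∈ Ioc 0 χ₁, 0 ≤ p χ)
    (hec : ∀ χ ∈ Ioc 0 χ₁, p χ + 2 * pt χ ≤ ρ χ)
    (hsupp : ∀ χ ∈ Ioc 0 χ₁, χ < a → ρ χ = 0 ∧ p χ = 0 ∧ pt χ = 0)
    (hbound : ∀ χ ∈ Ioc 0 χ₁, (R χ) ^ 2 * p χ ≤ C) (hC : 0 ≤ C)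
    (hRb : R χ₁ = R₁)
    (hexp : Real.exp (ν χ₁) = |deriv R χ₁|)
    (hsm1 : Λ * (R a + (χ₁ - a)) ^ 2 ≤ (1 + Λ * R₁ ^ 2) / 2)
    (hsm2 : R a + (χ₁ - a) ≤ R₁ + 1) :
    0 < deriv R χ₁ ∧
    0 ≤ -R₁ * (1 - (deriv R χ₁) ^ 2 - Λ * R₁ ^ 2) - 4 * R₁ * (deriv R χ₁) ^ 2
      + (deriv R χ₁) * Real.exp (Λ * (R₁ + 1) / (3 * Real.sqrt ((1 - Λ * R₁ ^ 2) / 2)) * (χ₁ - a))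
        * (R a / (3 * Real.sqrt (1 - Λ * (R a) ^ 2 / 3))) * (12 - 6 * Λ * (R a) ^ 2)
      + (16 * π * C + 4) * (deriv R χ₁)
        * Real.exp (Λ * (R₁ + 1) / (3 * Real.sqrt ((1 - Λ * R₁ ^ 2) / 2)) * (χ₁ - a)) * (χ₁ - a) := by
  have hχ₁ : 0 < χ₁ := lt_trans ha0 hab
  set s : Set ℝ := Ioc 0 χ₁ with hs
  have hsU : UniqueDiffOn ℝ s := uniqueDiffOn_Ioc 0 χ₁
  set W : ℝ → ℝ := derivWithin R s with hWdef
  set N : ℝ → ℝ := derivWithin ν s with hNdef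
  set W' : ℝ → ℝ := derivWithin W s with hW'def
  set N' : ℝ → ℝ := derivWithin N s with hN'def
  have hW1 : ContDiffOn ℝ 1 W s := hR2.derivWithin hsU (by norm_num)
  have hN1 : ContDiffOn ℝ 1 N s := hν2.derivWithin hsU (by norm_num)
  have contW : ContinuousOn W s := hW1.continuousOn
  have contN : ContinuousOn N s := hN1.continuousOn
  have contW' : ContinuousOn W' s := hW1.continuousOn_derivWithin hsU (by norm_num)
  have contN' : ContinuousOn N' s := hN1.continuousOn_derivWithin hsU (by norm_num)
  have contR : ContinuousOn R s := hR2.continuousOn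
  have contν : ContinuousOn ν s := hν2.continuousOn
  -- membership helpers
  have hIoos : Ioo 0 χ₁ ⊆ s := Ioo_subset_Ioc_self
  have hIccs : Icc a χ₁ ⊆ s := fun χ hχ => ⟨lt_of_lt_of_le ha0 hχ.1, hχ.2⟩
  have hmem : ∀ χ ∈ Ioo 0 χ₁, s ∈ 𝓝 χ := fun χ hχ => Ioc_mem_nhds hχ.1 hχ.2
  -- derivWithin = deriv at interior points
  have hWeq : ∀ χ ∈ Ioo 0 χ₁, W χ = deriv R χ :=
    fun χ hχ => derivWithin_of_mem_nhds (hmem χ hχ)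
  have hNeq : ∀ χ ∈ Ioo 0 χ₁, N χ = deriv ν χ :=
    fun χ hχ => derivWithin_of_mem_nhds (hmem χ hχ)
  have hW'eq : ∀ χ ∈ Ioo 0 χ₁, W' χ = deriv (deriv R) χ := by
    intro χ hχ
    have e1 : W =ᶠ[𝓝 χ] deriv R := by
      filter_upwards [Ioo_mem_nhds hχ.1 hχ.2] with y hy
      exact hWeq y hy
    rw [hW'def, derivWithin_of_mem_nhds (hmem χ hχ)]
    exact e1.deriv_eq
  have hN'eq : ∀ χ ∈ Ioo 0 χ₁, N' χ = deriv (deriv ν) χ := by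
    intro χ hχ
    have e1 : N =ᶠ[𝓝 χ] deriv ν := by
      filter_upwards [Ioo_mem_nhds hχ.1 hχ.2] with y hy
      exact hNeq y hy
    rw [hN'def, derivWithin_of_mem_nhds (hmem χ hχ)]
    exact e1.deriv_eq
  -- HasDerivAt facts at interior points
  have hRd : ∀ χ ∈ Ioo 0 χ₁, HasDerivAt R (W χ) χ := by
    intro χ hχ
    have h1 : DifferentiableAt ℝ R χ :=
      (hR2.contDiffAt (hmem χ hχ)).differentiableAt (by norm_num)
    rw [hWeq χ hχ]; exact h1.hasDerivAt
  have hνd : ∀ χ ∈ Ioo 0 χ₁, HasDerivAt ν (N χ) χ := by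
    intro χ hχ
    have h1 : DifferentiableAt ℝ ν χ :=
      (hν2.contDiffAt (hmem χ hχ)).differentiableAt (by norm_num)
    rw [hNeq χ hχ]; exact h1.hasDerivAt
  have hWd : ∀ χ ∈ Ioo 0 χ₁, HasDerivAt W (W' χ) χ := by
    intro χ hχ
    have h1 : DifferentiableAt ℝ W χ :=
      (hW1.contDiffAt (hmem χ hχ)).differentiableAt one_ne_zero
    rw [hW'def, derivWithin_of_mem_nhds (hmem χ hχ)]; exact h1.hasDerivAt
  have hNd : ∀ χ ∈ Ioo 0 χ₁, HasDerivAt N (N' χ) χ := by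
    intro χ hχ
    have h1 : DifferentiableAt ℝ N χ :=
      (hN1.contDiffAt (hmem χ hχ)).differentiableAt one_ne_zero
    rw [hN'def, derivWithin_of_mem_nhds (hmem χ hχ)]; exact h1.hasDerivAt
  -- the field equations in terms of W, N, W', N'
  have hRne : ∀ χ ∈ Ioc 0 χ₁, R χ ≠ 0 := fun χ hχ => (hRpos χ hχ).ne'
  have eρ : ∀ χ ∈ Ioo 0 χ₁,
      8 * π * ρ χ * (R χ) ^ 2 = 1 - (W χ) ^ 2 - 2 * R χ * W' χ - Λ * (R χ) ^ 2 := by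
    intro χ hχ
    have h := hρdef χ (hIoos hχ)
    rw [← hWeq χ hχ, ← hW'eq χ hχ] at h
    have h2 := hRne χ (hIoos hχ)
    field_simp at h
    linarith [h]
  have ep : ∀ χ ∈ Ioo 0 χ₁,
      8 * π * p χ * (R χ) ^ 2 = (W χ) ^ 2 - 1 + 2 * R χ * W χ * N χ + Λ * (R χ) ^ 2 := by
    intro χ hχ
    have h := hpdef χ (hIoos hχ)
    rw [← hWeq χ hχ, ← hNeq χ hχ] at h
    have h2 := hRne χ (hIoos hχ)
    field_simp at h
    linarith [h]
  have ept : ∀ χ ∈ Ioo 0 χ₁,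
      8 * π * pt χ * R χ = N χ * W χ + R χ * ((N χ) ^ 2 + N' χ) + W' χ + Λ * R χ := by
    intro χ hχ
    have h := hptdef χ (hIoos hχ)
    rw [← hWeq χ hχ, ← hNeq χ hχ, ← hW'eq χ hχ, ← hN'eq χ hχ] at h
    have h2 := hRne χ (hIoos hχ)
    field_simp at h
    linarith [h]

  -- ===== interior region: limits at 0 =====
  have haIoo : Ioo 0 a ⊆ Ioo 0 χ₁ := Ioo_subset_Ioo_right hab.le
  have haS : a ∈ s := ⟨ha0, hab.le⟩
  have hamem : a ∈ Ioo 0 χ₁ := ⟨ha0, hab⟩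
  have hRa : 0 < R a := hRpos a haS
  have hIccU : UniqueDiffOn ℝ (Icc 0 χ₁) := uniqueDiffOn_Icc hχ₁
  have hdiff0 : DifferentiableAt ℝ R 0 := by
    by_contra hcon
    rw [deriv_zero_of_not_differentiableAt hcon] at hR'0
    norm_num at hR'0
  have h0Icc : (0:ℝ) ∈ Icc 0 χ₁ := ⟨le_refl 0, hχ₁.le⟩
  have hDW0 : derivWithin R (Icc 0 χ₁) 0 = 1 := by
    rw [hdiff0.derivWithin (hIccU 0 h0Icc)]; exact hR'0
  have hWIcc : ∀ χ ∈ Ioo 0 χ₁, derivWithin R (Icc 0 χ₁) χ = W χ := by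
    intro χ hχ
    rw [derivWithin_of_mem_nhds (Icc_mem_nhds hχ.1 hχ.2), hWeq χ hχ]
  have hmono0 : 𝓝[Ioo 0 a] (0:ℝ) ≤ 𝓝[Icc 0 χ₁] 0 :=
    nhdsWithin_mono 0 (fun y hy => ⟨hy.1.le, le_trans hy.2.le hab.le⟩)
  have htendW : Tendsto W (𝓝[Ioo 0 a] 0) (𝓝 1) := by
    have h1 : ContinuousWithinAt (derivWithin R (Icc 0 χ₁)) (Icc 0 χ₁) 0 :=
      (hR1.continuousOn_derivWithin hIccU le_rfl) 0 h0Icc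
    have h2 : Tendsto (derivWithin R (Icc 0 χ₁)) (𝓝[Ioo 0 a] 0) (𝓝 1) := by
      rw [← hDW0]
      exact (h1.tendsto).mono_left hmono0
    refine h2.congr' ?_
    filter_upwards [eventually_mem_nhdsWithin] with y hy
    exact hWIcc y (haIoo hy)
  have htendR0 : Tendsto R (𝓝[Ioo 0 a] 0) (𝓝 0) := by
    have h1 : ContinuousWithinAt R (Icc 0 χ₁) 0 := hR1.continuousOn 0 h0Icc
    have h2 : Tendsto R (𝓝[Ioo 0 a] 0) (𝓝 (R 0)) := (h1.tendsto).mono_left hmono0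
    rwa [hR0] at h2
  have hNB : (𝓝[Ioo 0 a] (0:ℝ)).NeBot := by
    rw [← mem_closure_iff_nhdsWithin_neBot, closure_Ioo (ne_of_lt ha0)]
    exact ⟨le_refl 0, ha0.le⟩
  have hNBa : (𝓝[Ioo 0 a] a).NeBot := by
    rw [← mem_closure_iff_nhdsWithin_neBot, closure_Ioo (ne_of_lt ha0)]
    exact ⟨ha0.le, le_refl a⟩
  -- ===== F = q·R vanishes identically on the vacuum region =====
  set F : ℝ → ℝ := fun χ => R χ - R χ * (W χ)^2 - Λ/3 * (R χ)^3 with hF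
  have hFval : ∀ χ, F χ = R χ - R χ * (W χ)^2 - Λ/3 * (R χ)^3 := fun _ => rfl
  have hcontF : ContinuousOn F s :=
    (contR.sub (contR.mul (contW.pow 2))).sub ((contR.pow 3).const_smul (Λ/3))
  have hFd : ∀ χ ∈ Ioo 0 a, HasDerivAt F 0 χ := by
    intro χ hχ
    have hχ' : χ ∈ Ioo 0 χ₁ := haIoo hχ
    have h1 := hRd χ hχ'
    have h2 := hWd χ hχ'
    have hρ0 : ρ χ = 0 := (hsupp χ (hIoos hχ') hχ.2).1
    have he := eρ χ hχ'
    rw [hρ0] at he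
    have hD : HasDerivAt F
        (W χ - (W χ * (W χ)^2 + R χ * ((2:ℕ) * (W χ)^1 * W' χ))
          - Λ/3 * ((3:ℕ) * (R χ)^2 * W χ)) χ := by
      exact ((h1.sub (h1.mul (h2.pow 2))).sub ((h1.pow 3).const_mul (Λ/3)))
    convert hD using 1
    have he' : 1 - W χ^2 - 2*R χ*W' χ - Λ*R χ^2 = 0 := by linarith [he]
    push_cast
    linear_combination (-(W χ)) * he'
  have hFconst : ∀ χ ∈ Ioo 0 a, F χ = F a := by
    intro χ hχ
    have hsub : Icc χ a ⊆ s := fun y hy =>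
      ⟨lt_of_lt_of_le hχ.1 hy.1, le_trans hy.2 hab.le⟩
    have hsubI : Ioo χ a ⊆ Ioo 0 a := fun y hy => ⟨lt_trans hχ.1 hy.1, hy.2⟩
    have hcont : ContinuousOn F (Icc χ a) := hcontF.mono hsub
    have hdiffF : DifferentiableOn ℝ F (interior (Icc χ a)) := by
      rw [interior_Icc]
      exact fun y hy => ((hFd y (hsubI hy)).differentiableAt).differentiableWithinAt
    have hd0 : ∀ y ∈ interior (Icc χ a), deriv F y = 0 := by
      rw [interior_Icc]
      exact fun y hy => (hFd y (hsubI hy)).deriv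
    have hmono := monotoneOn_of_deriv_nonneg (convex_Icc χ a) hcont hdiffF
      (fun y hy => ge_of_eq (hd0 y hy))
    have hanti := antitoneOn_of_deriv_nonpos (convex_Icc χ a) hcont hdiffF
      (fun y hy => le_of_eq (hd0 y hy))
    have hχa : χ ∈ Icc χ a := ⟨le_refl χ, hχ.2.le⟩
    have haa : a ∈ Icc χ a := ⟨hχ.2.le, le_refl a⟩
    exact le_antisymm (hmono hχa haa hχ.2.le) (hanti hχa haa hχ.2.le)
  have hFa : F a = 0 := by
    have h1 : Tendsto F (𝓝[Ioo 0 a] 0) (𝓝 0) := by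
      have h2 := (htendR0.sub (htendR0.mul (htendW.pow 2))).sub
        ((htendR0.pow 3).const_mul (Λ/3))
      simpa using h2
    have h2 : Tendsto F (𝓝[Ioo 0 a] 0) (𝓝 (F a)) := by
      refine tendsto_const_nhds.congr' ?_
      filter_upwards [eventually_mem_nhdsWithin] with y hy
      exact (hFconst y hy).symm
    exact tendsto_nhds_unique h2 h1
  have hF0 : ∀ χ ∈ Ioo 0 a, F χ = 0 := fun χ hχ => (hFconst χ hχ).trans hFa
  -- Λ (R a)² < 1
  have hδpos : 0 < χ₁ - a := by linarith
  have hΛra : Λ * (R a)^2 < 1 := by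
    have h1 : Λ * (R a)^2 ≤ Λ * (R a + (χ₁ - a))^2 := by
      have : (R a)^2 ≤ (R a + (χ₁ - a))^2 := by nlinarith [hRa, hδpos]
      nlinarith [hΛ]
    nlinarith [hsm1, hΛR]
  -- ===== W > 0 on (0, a] =====
  have hWpos0 : ∀ e ∈ Ioc 0 a, 0 < W e := by
    intro e he
    by_contra hWe
    push_neg at hWe
    have hev : ∀ᶠ χ in 𝓝[Ioo 0 a] 0, (1/2 : ℝ) < W χ :=
      htendW.eventually (eventually_gt_nhds (by norm_num))
    have hev2 : ∀ᶠ χ in 𝓝[Ioo 0 a] 0, χ < e :=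
      (eventually_lt_nhds he.1).filter_mono nhdsWithin_le_nhds
    obtain ⟨c, hc1, hc2, hcmem⟩ := (hev.and (hev2.and eventually_mem_nhdsWithin)).exists
    have hce : c ≤ e := hc2.le
    have hsub : Icc c e ⊆ s := fun y hy =>
      ⟨lt_of_lt_of_le hcmem.1 hy.1, le_trans hy.2 (le_trans he.2 hab.le)⟩
    have h0mem : (0:ℝ) ∈ Icc (W e) (W c) := ⟨hWe, by linarith⟩
    obtain ⟨z, hzmem, hz0⟩ := intermediate_value_Icc' hce (contW.mono hsub) h0mem
    have hz1 : z ∈ Ioc 0 a := ⟨lt_of_lt_of_le hcmem.1 hzmem.1, le_trans hzmem.2 he.2⟩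
    rcases lt_or_eq_of_le hz1.2 with hza | hza
    · -- z < a : vacuum point with W = 0
      have hz2 : z ∈ Ioo 0 χ₁ := ⟨hz1.1, lt_trans hza hab⟩
      have hp0 : p z = 0 := (hsupp z (hIoos hz2) hza).2.1
      have he2 := ep z hz2
      rw [hp0, hz0] at he2
      -- he2 : 0 = 0 - 1 + 0 + Λ R z ^2  →  Λ R z ^2 = 1
      have hFz := hF0 z ⟨hz1.1, hza⟩
      rw [hFval z, hz0] at hFz
      -- F z = R z - 0 - Λ/3 R z ^3 = 0 and R z > 0 ⇒ Λ R z² = 3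
      have hRz : 0 < R z := hRpos z (hIoos hz2)
      nlinarith [he2, hFz, hRz]
    · -- z = a : W a = 0, contradict Λ (R a)² < 1 via F a = 0
      rw [hza] at hz0
      have h9 := hFa
      rw [hFval a, hz0] at h9
      nlinarith [hRa, hΛra, h9]
  have hu : 0 < W a := hWpos0 a ⟨ha0, le_refl a⟩
  have hu2 : (W a)^2 = 1 - Λ * (R a)^2 / 3 := by
    have h1 := hFa
    rw [hFval a] at h1
    have h2 : R a * (1 - (W a)^2 - Λ * (R a)^2/3) = 0 := by linear_combination h1
    rcases mul_eq_zero.mp h2 with h3 | h3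
    · exact absurd h3 hRa.ne'
    · linarith

  -- ===== the quasilocal mass function on the shell =====
  set mt : ℝ → ℝ := fun y => R y/2 - R y * (W y)^2/2 - Λ/6*(R y)^3 with hmt
  have hmtval : ∀ y, mt y = R y/2 - R y * (W y)^2/2 - Λ/6*(R y)^3 := fun _ => rfl
  have hcontmt : ContinuousOn mt s := by
    apply ContinuousOn.sub
    · exact (contR.div_const 2).sub ((contR.mul (contW.pow 2)).div_const 2)
    · exact (contR.pow 3).const_smul (Λ/6)
  have hmta : mt a = 0 := by
    rw [hmtval a, hu2]; ring
  have claim1 : ∀ c ∈ Ioc a χ₁, (∀ y ∈ Ioo a c, 0 < W y) → MonotoneOn mt (Icc a c) := by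
    intro c hc hWp
    have hsub : Icc a c ⊆ s := fun y hy => ⟨lt_of_lt_of_le ha0 hy.1, le_trans hy.2 hc.2⟩
    have hsubI : Ioo a c ⊆ Ioo 0 χ₁ := fun y hy =>
      ⟨lt_trans ha0 hy.1, lt_of_lt_of_le hy.2 hc.2⟩
    have hD : ∀ y ∈ Ioo a c, HasDerivAt mt
        (W y/2 - (W y * (W y)^2 + R y * ((2:ℕ) * (W y)^(2-1) * W' y))/2
          - Λ/6 * ((3:ℕ) * (R y)^(3-1) * W y)) y := by
      intro y hy
      have h1 := hRd y (hsubI hy)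
      have h2 := hWd y (hsubI hy)
      exact ((h1.div_const 2).sub ((h1.mul (h2.pow 2)).div_const 2)).sub
        ((h1.pow 3).const_mul (Λ/6))
    apply monotoneOn_of_deriv_nonneg (convex_Icc a c) (hcontmt.mono hsub)
    · rw [interior_Icc]
      exact fun y hy => ((hD y hy).differentiableAt).differentiableWithinAt
    · rw [interior_Icc]
      intro y hy
      rw [(hD y hy).deriv]
      have he := eρ y (hsubI hy)
      have hρy := hρpos y (hIoos (hsubI hy))
      have hRy := hRpos y (hIoos (hsubI hy))
      have hWy := hWp y hy
      have hπ := Real.pi_pos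
      push_cast
      nlinarith [mul_nonneg (mul_nonneg (by positivity : (0:ℝ) ≤ 8*π) hρy) (sq_nonneg (R y)),
        he, hWy.le]
  have claim2 : ∀ c ∈ Ioc a χ₁, (∀ y ∈ Ico a c, 0 < W y) →
      (∀ y ∈ Icc a c, 0 ≤ mt y) ∧ (∀ y ∈ Icc a c, (W y)^2 ≤ 1)
        ∧ (∀ y ∈ Icc a c, R y ≤ R a + (y - a)) := by
    intro c hc hWp
    have hsub : Icc a c ⊆ s := fun y hy => ⟨lt_of_lt_of_le ha0 hy.1, le_trans hy.2 hc.2⟩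
    have hsubI : Ioo a c ⊆ Ioo 0 χ₁ := fun y hy =>
      ⟨lt_trans ha0 hy.1, lt_of_lt_of_le hy.2 hc.2⟩
    have hmono := claim1 c hc (fun y hy => hWp y ⟨hy.1.le, hy.2⟩)
    have haIcc : a ∈ Icc a c := ⟨le_refl a, hc.1.le⟩
    have hmt0 : ∀ y ∈ Icc a c, 0 ≤ mt y := by
      intro y hy
      have := hmono haIcc hy hy.1
      rwa [hmta] at this
    have hW2le : ∀ y ∈ Icc a c, (W y)^2 ≤ 1 := by
      intro y hy
      have h1 := hmt0 y hy
      rw [hmtval y] at h1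
      have hRy := hRpos y (hsub hy)
      nlinarith [hΛ, pow_pos hRy 3]
    refine ⟨hmt0, hW2le, ?_⟩
    -- R y - y is antitone
    have hanti : AntitoneOn (fun y => R y - y) (Icc a c) := by
      apply antitoneOn_of_deriv_nonpos (convex_Icc a c)
      · exact (contR.mono hsub).sub continuousOn_id
      · rw [interior_Icc]
        intro y hy
        have hD : HasDerivAt (fun y => R y - y) (W y - 1) y := by
          exact (hRd y (hsubI hy)).sub (hasDerivAt_id y)
        exact hD.differentiableAt.differentiableWithinAt
      · rw [interior_Icc]
        intro y hy
        have hD : HasDerivAt (fun y => R y - y) (W y - 1) y := by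
          exact (hRd y (hsubI hy)).sub (hasDerivAt_id y)
        rw [hD.deriv]
        have h2 := hW2le y ⟨hy.1.le, hy.2.le⟩
        have hWy := hWp y ⟨hy.1.le, hy.2⟩
        nlinarith [h2, hWy]
    intro y hy
    have := hanti ⟨le_refl a, hc.1.le⟩ hy hy.1
    simp only at this
    linarith
  -- ===== W > 0 on [a, χ₁] =====
  have hvne : deriv R χ₁ ≠ 0 := by
    intro hcon
    have := Real.exp_pos (ν χ₁)
    rw [hexp, hcon] at this
    simp at this
  have hdiffb : DifferentiableAt ℝ R χ₁ := by
    by_contra hcon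
    exact hvne (deriv_zero_of_not_differentiableAt hcon)
  have hWb : W χ₁ = deriv R χ₁ := by
    rw [hWdef]
    exact hdiffb.derivWithin (hsU χ₁ ⟨hχ₁, le_refl χ₁⟩)
  have hWposIcc : ∀ y ∈ Icc a χ₁, 0 < W y := by
    by_contra hcon
    push_neg at hcon
    obtain ⟨e, he, hWe⟩ := hcon
    set Z : Set ℝ := Icc a χ₁ ∩ W ⁻¹' (Iic 0) with hZ
    have hZne : Z.Nonempty := ⟨e, he, hWe⟩
    have hZbdd : BddBelow Z := ⟨a, fun y hy => hy.1.1⟩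
    have hZclosed : IsClosed Z := by
      apply ContinuousOn.preimage_isClosed_of_isClosed (contW.mono hIccs)
        isClosed_Icc isClosed_Iic
    set z := sInf Z with hz
    have hzZ : z ∈ Z := hZclosed.csInf_mem hZne hZbdd
    have hza : a < z := by
      rcases lt_or_eq_of_le hzZ.1.1 with h | h
      · exact h
      · exfalso
        have h2 : W z ≤ 0 := hzZ.2
        rw [← h] at h2
        linarith [hu]
    have hbefore : ∀ y ∈ Ico a z, 0 < W y := by
      intro y hy
      by_contra hcon2
      push_neg at hcon2
      have : y ∈ Z := ⟨⟨hy.1, le_trans hy.2.le hzZ.1.2⟩, hcon2⟩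
      have := csInf_le hZbdd this
      rw [← hz] at this
      linarith [hy.2]
    have hWz : W z = 0 := by
      have hz0 : W z ≤ 0 := hzZ.2
      rcases lt_or_eq_of_le hz0 with h | h
      · exfalso
        have h0mem : (0:ℝ) ∈ Icc (W z) (W a) := ⟨h.le, hu.le⟩
        have hsub2 : Icc a z ⊆ s := fun y hy =>
          ⟨lt_of_lt_of_le ha0 hy.1, le_trans hy.2 hzZ.1.2⟩
        obtain ⟨w, hwmem, hw0⟩ := intermediate_value_Icc' hza.le (contW.mono hsub2) h0mem
        have hwz : w < z := by
          rcases lt_or_eq_of_le hwmem.2 with h2 | h2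
          · exact h2
          · exfalso; rw [h2] at hw0; rw [hw0] at h; exact lt_irrefl 0 h
        have : w ∈ Z := ⟨⟨hwmem.1, le_trans hwmem.2 hzZ.1.2⟩, le_of_eq hw0⟩
        have := csInf_le hZbdd this
        rw [← hz] at this
        linarith
      · exact h
    -- consequences up to z
    have hzIoc : z ∈ Ioc a χ₁ := ⟨hza, hzZ.1.2⟩
    obtain ⟨hmt0, hW2le, hRub⟩ := claim2 z hzIoc hbefore
    have hRz : 0 < R z := hRpos z ⟨lt_trans ha0 hza, hzZ.1.2⟩
    have hRzub : R z ≤ R a + (χ₁ - a) := by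
      have := hRub z ⟨hza.le, le_refl z⟩
      have h2 : z - a ≤ χ₁ - a := by linarith [hzZ.1.2]
      linarith
    have hΛz : Λ * (R z)^2 < 1 := by
      have h0 : (R z)^2 ≤ (R a + (χ₁ - a))^2 := by nlinarith [hRzub, hRz]
      nlinarith [hsm1, hΛR, mul_le_mul_of_nonneg_left h0 hΛ.le]
    rcases lt_or_eq_of_le hzZ.1.2 with hzb | hzb
    · -- z < χ₁ : use the p equation at z
      have hz2 : z ∈ Ioo 0 χ₁ := ⟨lt_trans ha0 hza, hzb⟩
      have he2 := ep z hz2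
      rw [hWz] at he2
      have hppz := hppos z (hIoos hz2)
      have hπ := Real.pi_pos
      nlinarith [he2, hppz, sq_nonneg (R z), hΛz,
        mul_nonneg (mul_nonneg (by positivity : (0:ℝ) ≤ 8*π) hppz) (sq_nonneg (R z))]
    · -- z = χ₁ : contradicts deriv R χ₁ ≠ 0
      rw [hzb, hWb] at hWz
      exact hvne hWz
  have hvpos : 0 < deriv R χ₁ := by rw [← hWb]; exact hWposIcc χ₁ ⟨hab.le, le_refl χ₁⟩
  obtain ⟨hmt0, hW2le, hRub⟩ := claim2 χ₁ ⟨hab, le_refl χ₁⟩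
      (fun y hy => hWposIcc y ⟨hy.1, hy.2.le⟩)

  -- ===== lower bound on N = ν' over the shell =====
  have hη : (0:ℝ) < (1 - Λ*R₁^2)/2 := by linarith
  have hsq : 0 < Real.sqrt ((1-Λ*R₁^2)/2) := Real.sqrt_pos.mpr hη
  set K₃ : ℝ := Λ*(R₁+1)/(3*Real.sqrt ((1-Λ*R₁^2)/2)) with hK₃def
  have hK₃pos : 0 ≤ K₃ := by positivity
  have hNlb : ∀ y ∈ Ioo a χ₁, -K₃ ≤ N y := by
    intro y hy
    have hy' : y ∈ Ioo 0 χ₁ := ⟨lt_trans ha0 hy.1, hy.2⟩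
    have hyIcc : y ∈ Icc a χ₁ := ⟨hy.1.le, hy.2.le⟩
    have hRy := hRpos y (hIoos hy')
    have hWy := hWposIcc y hyIcc
    have hpe := ep y hy'
    have hppy := hppos y (hIoos hy')
    have hmty := hmt0 y hyIcc
    have hπ := Real.pi_pos
    have hp8 : 0 ≤ 8*π*p y*(R y)^2 :=
      mul_nonneg (mul_nonneg (by positivity) hppy) (sq_nonneg (R y))
    have hRyub : R y ≤ R₁ + 1 := by
      have h1 := hRub y hyIcc
      have h2 : y - a ≤ χ₁ - a := by linarith [hy.2.le]
      linarith [hsm2]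
    by_cases hcase : 0 ≤ 8*π*p y*(R y)^2 + 1 - (W y)^2 - Λ*(R y)^2
    · -- numerator nonnegative ⇒ N ≥ 0
      have h2 : 0 ≤ 2*R y*W y*N y := by linarith only [hpe, hcase]
      have hc2 : 0 < 2*R y*W y := by
        have := mul_pos hRy hWy
        linarith only [this]
      have h3 : 0 ≤ N y := nonneg_factor hc2 (by linarith only [h2])
      linarith only [h3, hK₃pos]
    · push_neg at hcase
      have hW2 : (1 - Λ*R₁^2)/2 ≤ (W y)^2 := by
        have h0 : (R y)^2 ≤ (R a + (χ₁-a))^2 := by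
          have h1 := hRub y hyIcc
          have h2 : y - a ≤ χ₁ - a := by linarith [hy.2.le]
          have h3 : R y ≤ R a + (χ₁ - a) := by linarith
          exact pow_le_pow_left₀ hRy.le h3 2
        have h5 : Λ*(R y)^2 ≤ (1+Λ*R₁^2)/2 :=
          le_trans (mul_le_mul_of_nonneg_left h0 hΛ.le) hsm1
        linarith only [hcase, hp8, h5]
      have hWlb : Real.sqrt ((1-Λ*R₁^2)/2) ≤ W y := by
        have h1 := Real.sqrt_le_sqrt hW2
        rwa [Real.sqrt_sq hWy.le] at h1
      -- numerator is at least -2ΛR²/3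
      have h7 : R y*(1 - (W y)^2) = 2*mt y + Λ*(R y)^3/3 := by
        rw [hmtval y]; ring
      have h6' : (2*(R y)^2/3) * (N y*(3*W y) + Λ*R y)
          = R y*(8*π*p y*(R y)^2) + 2*mt y := by
        linear_combination (-(R y))*hpe + h7
      have h6 : 0 ≤ (2*(R y)^2/3) * (N y*(3*W y) + Λ*R y) := by
        rw [h6']
        have t1 := mul_nonneg hRy.le hp8
        linarith only [t1, hmty]
      have h8' : -(Λ*R y) ≤ N y*(3*W y) := by
        have hpos : 0 < 2*(R y)^2/3 := by positivity
        have := nonneg_factor hpos h6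
        linarith only [this]
      have e1 : K₃*(3*Real.sqrt ((1-Λ*R₁^2)/2)) = Λ*(R₁+1) := by
        rw [hK₃def]
        exact div_mul_cancel₀ _ (by positivity)
      have e2 : Λ*(R₁+1) ≤ K₃*(3*W y) := by
        rw [← e1]
        exact mul_le_mul_of_nonneg_left (by linarith only [hWlb]) hK₃pos
      have e3 : Λ*R y ≤ Λ*(R₁+1) := mul_le_mul_of_nonneg_left hRyub hΛ.le
      have h10 : -K₃*(3*W y) ≤ N y*(3*W y) := by linarith only [h8', e2, e3]
      have h3W : 0 < 3*W y := by linarith [hWy]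
      exact le_of_mul_le_mul_right h10 h3W
  -- ===== upper bound for ν on the shell =====
  have hνub : ∀ y ∈ Icc a χ₁, ν y ≤ ν χ₁ + K₃*(χ₁ - a) := by
    have hmono : MonotoneOn (fun y => ν y + K₃*y) (Icc a χ₁) := by
      apply monotoneOn_of_deriv_nonneg (convex_Icc a χ₁)
      · exact (contν.mono hIccs).add (continuous_const.mul continuous_id).continuousOn
      · rw [interior_Icc]
        intro y hy
        have hy' : y ∈ Ioo 0 χ₁ := ⟨lt_trans ha0 hy.1, hy.2⟩
        have hD : HasDerivAt (fun y => ν y + K₃*y) (N y + K₃) y := by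
          exact ((hνd y hy').add ((hasDerivAt_id y).const_mul K₃)).congr_deriv (by ring)
        exact hD.differentiableAt.differentiableWithinAt
      · rw [interior_Icc]
        intro y hy
        have hy' : y ∈ Ioo 0 χ₁ := ⟨lt_trans ha0 hy.1, hy.2⟩
        have hD : HasDerivAt (fun y => ν y + K₃*y) (N y + K₃) y := by
          exact ((hνd y hy').add ((hasDerivAt_id y).const_mul K₃)).congr_deriv (by ring)
        rw [hD.deriv]
        linarith [hNlb y hy]
    intro y hy
    have h1 := hmono hy ⟨hab.le, le_refl χ₁⟩ hy.2
    have h2 : a ≤ y := hy.1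
    simp only at h1
    have t1 : K₃*a ≤ K₃*y := mul_le_mul_of_nonneg_left h2 hK₃pos
    linarith only [h1, t1]
  -- ===== value of N at a =====
  have hNval : ∀ y ∈ Ioo 0 a, N y = -(Λ*R y/(3*W y)) := by
    intro y hy
    have hy' : y ∈ Ioo 0 χ₁ := haIoo hy
    have hRy := hRpos y (hIoos hy')
    have hWy := hWpos0 y ⟨hy.1, hy.2.le⟩
    have hpe := ep y hy'
    have hp0 : p y = 0 := (hsupp y (hIoos hy') hy.2).2.1
    rw [hp0] at hpe
    have hFy := hF0 y hy
    rw [hFval y] at hFy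
    -- W² = 1 - ΛR²/3
    have hW2 : (W y)^2 = 1 - Λ*(R y)^2/3 := by
      have h2 : R y * (1 - (W y)^2 - Λ * (R y)^2/3) = 0 := by linear_combination hFy
      rcases mul_eq_zero.mp h2 with h3 | h3
      · exact absurd h3 hRy.ne'
      · linarith
    have hne3 : (3:ℝ)*W y ≠ 0 := ne_of_gt (by linarith [hWy])
    norm_num at hpe
    have h5 : 2*R y*W y*N y = -(2*Λ*(R y)^2/3) := by linarith [hpe, hW2]
    have h6 : R y * (N y*(3*W y) + Λ*R y) = 0 := by linear_combination (3/2) * h5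
    rcases mul_eq_zero.mp h6 with h7 | h7
    · exact absurd h7 hRy.ne'
    · have h8 : -(Λ*R y/(3*W y)) = (-(Λ*R y))/(3*W y) := by ring
      rw [h8, eq_div_iff hne3]
      linarith [h7]
  have hNa : N a = -(Λ*R a/(3*W a)) := by
    have hsubIooa : Ioo 0 a ⊆ s := fun y hy => ⟨hy.1, le_trans hy.2.le hab.le⟩
    have hmonoa : 𝓝[Ioo 0 a] a ≤ 𝓝[s] a := nhdsWithin_mono a hsubIooa
    have h1 : Tendsto N (𝓝[Ioo 0 a] a) (𝓝 (N a)) :=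
      ((contN a haS).tendsto).mono_left hmonoa
    have h2 : Tendsto (fun y => -(Λ*R y/(3*W y))) (𝓝[Ioo 0 a] a)
        (𝓝 (-(Λ*R a/(3*W a)))) := by
      have c1 : ContinuousWithinAt (fun y => Λ*R y) s a :=
        continuousWithinAt_const.mul (contR a haS)
      have c2 : ContinuousWithinAt (fun y => 3*W y) s a :=
        continuousWithinAt_const.mul (contW a haS)
      have hne : (3:ℝ)*W a ≠ 0 := ne_of_gt (by linarith [hu])
      exact ((c1.div c2 hne).neg.tendsto).mono_left hmonoa
    have h3 : Tendsto N (𝓝[Ioo 0 a] a) (𝓝 (-(Λ*R a/(3*W a)))) := by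
      refine h2.congr' ?_
      filter_upwards [eventually_mem_nhdsWithin] with y hy
      exact (hNval y hy).symm
    exact tendsto_nhds_unique h1 h3
  -- ===== boundary inequality at χ₁ =====
  have hNBb : (𝓝[Ioo a χ₁] χ₁).NeBot := by
    rw [← mem_closure_iff_nhdsWithin_neBot, closure_Ioo (ne_of_lt hab)]
    exact ⟨hab.le, le_refl χ₁⟩
  have hNb : 1 - (deriv R χ₁)^2 - Λ*R₁^2 ≤ 2*R₁*(deriv R χ₁)*(N χ₁) := by
    have hsubb : Ioo a χ₁ ⊆ s := fun y hy => ⟨lt_trans ha0 hy.1, hy.2.le⟩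
    have hmonob : 𝓝[Ioo a χ₁] χ₁ ≤ 𝓝[s] χ₁ := nhdsWithin_mono χ₁ hsubb
    have hb : χ₁ ∈ s := ⟨hχ₁, le_refl χ₁⟩
    have h1 : Tendsto (fun y => 2*R y*W y*N y) (𝓝[Ioo a χ₁] χ₁)
        (𝓝 (2*R₁*(deriv R χ₁)*(N χ₁))) := by
      have c1 : ContinuousWithinAt (fun y => 2*R y*W y*N y) s χ₁ :=
        ((continuousWithinAt_const.mul (contR χ₁ hb)).mul (contW χ₁ hb)).mul (contN χ₁ hb)
      have := (c1.tendsto).mono_left hmonob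
      rw [hRb, hWb] at this
      exact this
    have h2 : Tendsto (fun y => 1 - (W y)^2 - Λ*(R y)^2) (𝓝[Ioo a χ₁] χ₁)
        (𝓝 (1 - (deriv R χ₁)^2 - Λ*R₁^2)) := by
      have c1 : ContinuousWithinAt (fun y => 1 - (W y)^2 - Λ*(R y)^2) s χ₁ :=
        (continuousWithinAt_const.sub ((contW χ₁ hb).pow 2)).sub
          (continuousWithinAt_const.mul ((contR χ₁ hb).pow 2))
      have := (c1.tendsto).mono_left hmonob
      rw [hRb, hWb] at this
      exact this
    refine le_of_tendsto_of_tendsto h2 h1 ?_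
    filter_upwards [eventually_mem_nhdsWithin] with y hy
    have hy' : y ∈ Ioo 0 χ₁ := ⟨lt_trans ha0 hy.1, hy.2⟩
    have hpe := ep y hy'
    have hp8 : 0 ≤ 8*π*p y*(R y)^2 :=
      mul_nonneg (mul_nonneg (by positivity) (hppos y (hIoos hy'))) (sq_nonneg (R y))
    linarith only [hpe, hp8]

  -- ===== FTC on the shell =====
  set G : ℝ → ℝ := fun y => -Real.exp (ν y) * (2*(R y)^2*N y + 4*R y*W y) with hG
  have hGval : ∀ y, G y = -Real.exp (ν y) * (2*(R y)^2*N y + 4*R y*W y) := fun _ => rfl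
  set Gd : ℝ → ℝ := fun y => -Real.exp (ν y) *
      (2*(R y)^2*((N y)^2 + N' y) + 8*R y*W y*N y + 4*(W y)^2 + 4*R y*W' y) with hGdd
  have hGdval : ∀ y, Gd y = -Real.exp (ν y) *
      (2*(R y)^2*((N y)^2 + N' y) + 8*R y*W y*N y + 4*(W y)^2 + 4*R y*W' y) := fun _ => rfl
  have hGderiv : ∀ y ∈ Ioo a χ₁, HasDerivAt G (Gd y) y := by
    intro y hy
    have hy' : y ∈ Ioo 0 χ₁ := ⟨lt_trans ha0 hy.1, hy.2⟩
    have h1 := hRd y hy'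
    have h2 := hWd y hy'
    have h3 := hνd y hy'
    have h4 := hNd y hy'
    have hE : HasDerivAt (fun t => -Real.exp (ν t)) (-(Real.exp (ν y) * N y)) y := h3.exp.neg
    have hA : HasDerivAt (fun t => 2*(R t)^2*N t)
        ((2*((2:ℕ)*(R y)^(2-1)*W y))*N y + (2*(R y)^2)*N' y) y :=
      ((h1.pow 2).const_mul 2).mul h4
    have hB : HasDerivAt (fun t => 4*R t*W t) ((4*W y)*W y + (4*R y)*W' y) y :=
      (h1.const_mul 4).mul h2
    have hall := hE.mul (hA.add hB)
    have hval : Gd y = (-(Real.exp (ν y) * N y))*(2*(R y)^2*N y + 4*R y*W y)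
        + (-Real.exp (ν y))*((((2*((2:ℕ)*(R y)^(2-1)*W y))*N y + (2*(R y)^2)*N' y))
          + ((4*W y)*W y + (4*R y)*W' y)) := by
      rw [hGdval y]
      push_cast
      ring
    rw [hval]
    exact hall
  have hGcont : ContinuousOn G (Icc a χ₁) := by
    apply ContinuousOn.mono _ hIccs
    exact ((Real.continuous_exp.comp_continuousOn contν).neg).mul
      (((continuousOn_const.mul (contR.pow 2)).mul contN).add
        ((continuousOn_const.mul contR).mul contW))
  have hGdcont : ContinuousOn Gd (Icc a χ₁) := by
    apply ContinuousOn.mono _ hIccs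
    exact ((Real.continuous_exp.comp_continuousOn contν).neg).mul
      (((((continuousOn_const.mul (contR.pow 2)).mul ((contN.pow 2).add contN')).add
        (((continuousOn_const.mul contR).mul contW).mul contN)).add
        (continuousOn_const.mul (contW.pow 2))).add
        ((continuousOn_const.mul contR).mul contW'))
  have hInt : IntervalIntegrable Gd volume a χ₁ :=
    (uIcc_of_le hab.le ▸ hGdcont).intervalIntegrable
  have hFTC : ∫ y in a..χ₁, Gd y = G χ₁ - G a :=
    intervalIntegral.integral_eq_sub_of_hasDeriv_right_of_le hab.le hGcont
      (fun y hy => (hGderiv y hy).hasDerivWithinAt) hInt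
  -- pointwise lower bound on Gd
  set Vb : ℝ := Real.exp (ν χ₁ + K₃*(χ₁ - a)) with hVb
  have hVbpos : 0 < Vb := Real.exp_pos _
  have hπ := Real.pi_pos
  have hcoef : (0:ℝ) ≤ 16*π*C + 4 := by
    have : 0 ≤ 16*π*C := by positivity
    linarith only [this]
  have hGdlb : ∀ y ∈ Ioo a χ₁, -(16*π*C+4)*Vb ≤ Gd y := by
    intro y hy
    have hy' : y ∈ Ioo 0 χ₁ := ⟨lt_trans ha0 hy.1, hy.2⟩
    have e1 := eρ y hy'
    have e2 := ep y hy'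
    have e3 := ept y hy'
    have hid : Gd y = Real.exp (ν y) *
        (8*π*(ρ y - 3*p y - 2*pt y)*(R y)^2 - 4 + 6*Λ*(R y)^2) := by
      rw [hGdval y]
      linear_combination (-(Real.exp (ν y))) * (e1 - 3*e2 - 2*(R y)*e3)
    rw [hid]
    have hecy := hec y (hIoos hy')
    have hby := hbound y (hIoos hy')
    have hννb : ν y ≤ ν χ₁ + K₃*(χ₁ - a) := hνub y ⟨hy.1.le, hy.2.le⟩
    have hey : Real.exp (ν y) ≤ Vb := by
      rw [hVb]
      exact Real.exp_le_exp.mpr hννb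
    have hey0 : (0:ℝ) < Real.exp (ν y) := Real.exp_pos _
    have t2 : 0 ≤ 8*π*(ρ y - p y - 2*pt y)*(R y)^2 :=
      mul_nonneg (mul_nonneg (by positivity) (by linarith only [hecy])) (sq_nonneg _)
    have t3 : 16*π*((R y)^2*(p y)) ≤ 16*π*C :=
      mul_le_mul_of_nonneg_left hby (by positivity)
    have tid : 8*π*(ρ y - 3*p y - 2*pt y)*(R y)^2
        = 8*π*(ρ y - p y - 2*pt y)*(R y)^2 - 16*π*((R y)^2*(p y)) := by ring
    have t1 : -(16*π*C) ≤ 8*π*(ρ y - 3*p y - 2*pt y)*(R y)^2 := by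
      linarith only [t2, t3, tid]
    have t5 : (0:ℝ) ≤ 6*Λ*(R y)^2 := by positivity
    have t4 : -(16*π*C) - 4 ≤ 8*π*(ρ y - 3*p y - 2*pt y)*(R y)^2 - 4 + 6*Λ*(R y)^2 := by
      linarith only [t1, t5]
    calc -(16*π*C+4)*Vb ≤ -(16*π*C+4)*Real.exp (ν y) :=
          mul_le_mul_of_nonpos_left hey (by linarith only [hcoef])
      _ = Real.exp (ν y) * (-(16*π*C) - 4) := by ring
      _ ≤ Real.exp (ν y) * (8*π*(ρ y - 3*p y - 2*pt y)*(R y)^2 - 4 + 6*Λ*(R y)^2) :=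
          mul_le_mul_of_nonneg_left t4 hey0.le
  -- integrate the lower bound
  have hIlb : -(16*π*C+4)*Vb*(χ₁ - a) ≤ G χ₁ - G a := by
    rw [← hFTC]
    have hconst : IntervalIntegrable (fun _ : ℝ => -(16*π*C+4)*Vb) volume a χ₁ :=
      intervalIntegrable_const
    have hae : (fun _ : ℝ => -(16*π*C+4)*Vb) ≤ᵐ[volume.restrict (Icc a χ₁)] Gd := by
      have hnull : ∀ᵐ y ∂(volume : Measure ℝ), y ∉ ({a, χ₁} : Set ℝ) := by
        have h0 : (volume : Measure ℝ) ({a, χ₁} : Set ℝ) = 0 :=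
          (Set.toFinite ({a, χ₁} : Set ℝ)).measure_zero volume
        exact (MeasureTheory.measure_eq_zero_iff_ae_notMem).mp h0
      filter_upwards [MeasureTheory.ae_restrict_mem measurableSet_Icc,
        MeasureTheory.ae_restrict_of_ae hnull] with y h1 h2
      simp only [Set.mem_insert_iff, Set.mem_singleton_iff, not_or] at h2
      have hyIoo : y ∈ Ioo a χ₁ :=
        ⟨lt_of_le_of_ne h1.1 (Ne.symm h2.1), lt_of_le_of_ne h1.2 h2.2⟩
      exact hGdlb y hyIoo
    have hmono := intervalIntegral.integral_mono_ae_restrict hab.le hconst hInt hae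
    have hcval : ∫ _ in a..χ₁, (-(16*π*C+4)*Vb) = (χ₁ - a) * (-(16*π*C+4)*Vb) := by
      rw [intervalIntegral.integral_const, smul_eq_mul]
    rw [hcval] at hmono
    linarith only [hmono]
  -- ===== assembling the boundary terms =====
  have hexpb : Real.exp (ν χ₁) = deriv R χ₁ := by rw [hexp, abs_of_pos hvpos]
  have hGb : G χ₁ ≤ -R₁*(1 - (deriv R χ₁)^2 - Λ*R₁^2) - 4*R₁*(deriv R χ₁)^2 := by
    rw [hGval χ₁, hRb, hWb, hexpb]
    have t1 : R₁*(1 - (deriv R χ₁)^2 - Λ*R₁^2) ≤ R₁*(2*R₁*(deriv R χ₁)*(N χ₁)) :=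
      mul_le_mul_of_nonneg_left hNb hR₁.le
    nlinarith only [t1]
  have husqrt : W a = Real.sqrt (1 - Λ*(R a)^2/3) := by
    rw [← hu2, Real.sqrt_sq hu.le]
  have h3u : (3:ℝ)*W a ≠ 0 := ne_of_gt (by linarith only [hu])
  have hNa' : N a * (3*W a) = -(Λ*R a) := by
    rw [hNa, neg_mul, div_mul_cancel₀ _ h3u]
  have key2 : 2*(R a)^2*(N a) + 4*(R a)*(W a) = (R a/(3*W a))*(12 - 6*Λ*(R a)^2) := by
    rw [div_mul_eq_mul_div, eq_div_iff h3u]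
    linear_combination (2*(R a)^2)*hNa' + (12*(R a))*hu2
  have hGaval : -G a = Real.exp (ν a) * ((R a/(3*W a))*(12 - 6*Λ*(R a)^2)) := by
    rw [hGval a, key2]
    ring
  have hQpos : 0 ≤ (R a/(3*W a))*(12 - 6*Λ*(R a)^2) := by
    apply mul_nonneg
    · positivity
    · linarith only [hΛra]
  have hea : Real.exp (ν a) ≤ (deriv R χ₁)*Real.exp (K₃*(χ₁-a)) := by
    have hra := hνub a ⟨le_refl a, hab.le⟩
    rw [← hexpb, ← Real.exp_add]
    exact Real.exp_le_exp.mpr hra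
  have hGa : -G a ≤ (deriv R χ₁)*Real.exp (K₃*(χ₁-a))*((R a/(3*W a))*(12 - 6*Λ*(R a)^2)) := by
    rw [hGaval]
    exact mul_le_mul_of_nonneg_right hea hQpos
  have hVbval : Vb = (deriv R χ₁)*Real.exp (K₃*(χ₁-a)) := by
    rw [hVb, Real.exp_add, hexpb]
  refine ⟨hvpos, ?_⟩
  rw [← husqrt]
  rw [hVbval] at hIlb
  nlinarith only [hIlb, hGb, hGa]





end Key

/-- Infinitely thin shells do not saturate the compactness bound when
`0 < ΛR₁² < 1`: for a sequence of regular static solutions approaching an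
infinitely thin shell of area radius `R₁` and mass `M`, the strict inequality
`M/R₁ < 2/9 − ΛR₁²/3 + (2/9)√(1 + 3ΛR₁²)` holds. -/
theorem thin_shell_not_saturating
    (Λ χ₁ R₁ M : ℝ) (hΛ : 0 < Λ) (hχ₁ : 0 < χ₁) (hR₁ : 0 < R₁)
    (hΛR : Λ * R₁ ^ 2 < 1)
    (R ν ρ p pt m : ℕ → ℝ → ℝ) (χ₀ : ℕ → ℝ)
    (hR1 : ∀ k, ContDiffOn ℝ 1 (R k) (Icc 0 χ₁))
    (hR2 : ∀ k, ContDiffOn ℝ 2 (R k) (Ioc 0 χ₁))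
    (hν : ∀ k, ContDiffOn ℝ 2 (ν k) (Ioc 0 χ₁))
    (hRpos : ∀ k, ∀ χ ∈ Ioc 0 χ₁, 0 < R k χ)
    (hR0 : ∀ k, R k 0 = 0) (hR'0 : ∀ k, deriv (R k) 0 = 1)
    (hρdef : ∀ k, ∀ χ ∈ Ioc 0 χ₁,
      8 * π * ρ k χ =
        (1 - (deriv (R k) χ) ^ 2 - 2 * R k χ * deriv (deriv (R k)) χ)
          / (R k χ) ^ 2 - Λ)
    (hpdef : ∀ k, ∀ χ ∈ Ioc 0 χ₁,
      8 * π * p k χ =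
        ((deriv (R k) χ) ^ 2 - 1 + 2 * R k χ * deriv (R k) χ * deriv (ν k) χ)
          / (R k χ) ^ 2 + Λ)
    (hptdef : ∀ k, ∀ χ ∈ Ioc 0 χ₁,
      8 * π * pt k χ =
        (deriv (ν k) χ * deriv (R k) χ
            + R k χ * ((deriv (ν k) χ) ^ 2 + deriv (deriv (ν k)) χ)
            + deriv (deriv (R k)) χ) / R k χ + Λ)
    (hmdef : ∀ k, ∀ χ ∈ Ioc 0 χ₁,
      m k χ = R k χ / 2 * (1 - (deriv (R k) χ) ^ 2) - Λ / 6 * (R k χ) ^ 3)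
    (hρpos : ∀ k, ∀ χ ∈ Ioc 0 χ₁, 0 ≤ ρ k χ)
    (hppos : ∀ k, ∀ χ ∈ Ioc 0 χ₁, 0 ≤ p k χ)
    (hec : ∀ k, ∀ χ ∈ Ioc 0 χ₁, p k χ + 2 * pt k χ ≤ ρ k χ)
    (hχ₀ : ∀ k, 0 < χ₀ k ∧ χ₀ k < χ₁)
    (hχ₀lim : Tendsto χ₀ atTop (nhds χ₁))
    (hsupp : ∀ k, ∀ χ ∈ Ioc 0 χ₁, χ < χ₀ k →
      ρ k χ = 0 ∧ p k χ = 0 ∧ pt k χ = 0)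
    (hbound : ∃ C : ℝ, ∀ k, ∀ χ ∈ Ioc 0 χ₁, (R k χ) ^ 2 * p k χ ≤ C)
    (hint : Tendsto
      (fun k => ∫ χ in (χ₀ k)..χ₁, (ρ k χ - 2 * pt k χ) * (R k χ) ^ 2)
      atTop (nhds 0))
    (hRb : ∀ k, R k χ₁ = R₁)
    (hR₀lim : Tendsto (fun k => R k (χ₀ k)) atTop (nhds R₁))
    (hνb : ∀ k, Real.exp (ν k χ₁) =
      Real.sqrt (1 - 2 * m k χ₁ / R₁ - Λ * R₁ ^ 2 / 3))
    (hM : Tendsto (fun k => m k χ₁) atTop (nhds M)) :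
    M / R₁ < 2 / 9 - Λ * R₁ ^ 2 / 3
      + 2 / 9 * Real.sqrt (1 + 3 * Λ * R₁ ^ 2) := by
  obtain ⟨C, hCb⟩ := hbound
  have hbmem : χ₁ ∈ Ioc 0 χ₁ := ⟨hχ₁, le_refl _⟩
  have hC : 0 ≤ C :=
    le_trans (mul_nonneg (sq_nonneg _) (hppos 0 χ₁ hbmem)) (hCb 0 χ₁ hbmem)
  have hR₁ne : R₁ ≠ 0 := hR₁.ne'
  -- v_k and its square
  have hv2 : ∀ k, (deriv (R k) χ₁)^2 = 1 - 2*(m k χ₁)/R₁ - Λ*R₁^2/3 := by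
    intro k
    have h := hmdef k χ₁ hbmem
    rw [hRb k] at h
    rw [h]
    field_simp
    ring
  have hexpk : ∀ k, Real.exp (ν k χ₁) = |deriv (R k) χ₁| := by
    intro k
    rw [hνb k, show (1 - 2*(m k χ₁)/R₁ - Λ*R₁^2/3) = (deriv (R k) χ₁)^2 from (hv2 k).symm,
      Real.sqrt_sq_eq_abs]
  -- limits
  have hδlim : Tendsto (fun k => χ₁ - χ₀ k) atTop (𝓝 0) := by
    have := hχ₀lim.const_sub χ₁
    simpa using this
  have hrlim : Tendsto (fun k => R k (χ₀ k)) atTop (𝓝 R₁) := hR₀lim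
  -- eventual smallness conditions
  have hev1 : ∀ᶠ k in atTop, Λ*(R k (χ₀ k) + (χ₁ - χ₀ k))^2 ≤ (1 + Λ*R₁^2)/2 := by
    have h1 : Tendsto (fun k => Λ*(R k (χ₀ k) + (χ₁ - χ₀ k))^2) atTop
        (𝓝 (Λ*(R₁ + 0)^2)) := tendsto_const_nhds.mul ((hrlim.add hδlim).pow 2)
    have h2 : Λ*(R₁+0)^2 < (1+Λ*R₁^2)/2 := by
      rw [add_zero]; linarith only [hΛR]
    exact h1.eventually_le_const h2
  have hev2 : ∀ᶠ k in atTop, R k (χ₀ k) + (χ₁ - χ₀ k) ≤ R₁ + 1 := by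
    have h1 : Tendsto (fun k => R k (χ₀ k) + (χ₁ - χ₀ k)) atTop (𝓝 (R₁ + 0)) :=
      hrlim.add hδlim
    have h2 : R₁ + 0 < R₁ + 1 := by linarith
    exact h1.eventually_le_const h2
  set K₃ : ℝ := Λ*(R₁+1)/(3*Real.sqrt ((1-Λ*R₁^2)/2)) with hK₃def
  have hkey : ∀ᶠ k in atTop, 0 < deriv (R k) χ₁ ∧
      0 ≤ -R₁ * (1 - (deriv (R k) χ₁) ^ 2 - Λ * R₁ ^ 2) - 4 * R₁ * (deriv (R k) χ₁) ^ 2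
      + (deriv (R k) χ₁) * Real.exp (K₃ * (χ₁ - χ₀ k))
        * (R k (χ₀ k) / (3 * Real.sqrt (1 - Λ * (R k (χ₀ k)) ^ 2 / 3))) * (12 - 6 * Λ * (R k (χ₀ k)) ^ 2)
      + (16 * π * C + 4) * (deriv (R k) χ₁)
        * Real.exp (K₃ * (χ₁ - χ₀ k)) * (χ₁ - χ₀ k) := by
    filter_upwards [hev1, hev2] with k h1 h2
    exact key Λ χ₁ R₁ (χ₀ k) C (R k) (ν k) (ρ k) (p k) (pt k)
      hΛ hR₁ hΛR (hχ₀ k).1 (hχ₀ k).2 (hR1 k) (hR2 k) (hν k) (hRpos k)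
      (hR0 k) (hR'0 k) (hρdef k) (hpdef k) (hptdef k) (hρpos k) (hppos k)
      (hec k) (hsupp k) (hCb k) hC (hRb k) (hexpk k) h1 h2
  -- limit of v_k
  have hv2lim : Tendsto (fun k => (deriv (R k) χ₁)^2) atTop
      (𝓝 (1 - 2*M/R₁ - Λ*R₁^2/3)) := by
    have h1 : Tendsto (fun k => 1 - 2*(m k χ₁)/R₁ - Λ*R₁^2/3) atTop
        (𝓝 (1 - 2*M/R₁ - Λ*R₁^2/3)) := by
      exact (tendsto_const_nhds.sub ((hM.const_mul 2).div_const R₁)).sub tendsto_const_nhds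
    exact h1.congr (fun k => (hv2 k).symm)
  have hV0 : 0 ≤ 1 - 2*M/R₁ - Λ*R₁^2/3 :=
    ge_of_tendsto' hv2lim (fun k => sq_nonneg _)
  set vI : ℝ := Real.sqrt (1 - 2*M/R₁ - Λ*R₁^2/3) with hvinf
  set uI : ℝ := Real.sqrt (1 - Λ*R₁^2/3) with huinf
  have huIpos : 0 < uI := Real.sqrt_pos.mpr (by nlinarith only [hΛR, hΛ, hR₁])
  have hvlim : Tendsto (fun k => deriv (R k) χ₁) atTop (𝓝 vI) := by
    have h1 : Tendsto (fun k => Real.sqrt ((deriv (R k) χ₁)^2)) atTop (𝓝 vI) := by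
      rw [hvinf]
      exact (Real.continuous_sqrt.tendsto _).comp hv2lim
    apply h1.congr'
    filter_upwards [hkey] with k hk
    exact Real.sqrt_sq hk.1.le
  have hexplim : Tendsto (fun k => Real.exp (K₃*(χ₁ - χ₀ k))) atTop (𝓝 1) := by
    have h1 : Tendsto (fun k => K₃*(χ₁ - χ₀ k)) atTop (𝓝 (K₃*0)) :=
      hδlim.const_mul K₃
    have h2 := (Real.continuous_exp.tendsto (K₃*0)).comp h1
    simpa [Function.comp_def] using h2
  have hsqlim : Tendsto (fun k => Real.sqrt (1 - Λ*(R k (χ₀ k))^2/3)) atTop (𝓝 uI) := by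
    rw [huinf]
    apply (Real.continuous_sqrt.tendsto _).comp
    exact tendsto_const_nhds.sub ((tendsto_const_nhds.mul (hrlim.pow 2)).div_const 3)
  have hdivlim : Tendsto (fun k => R k (χ₀ k) / (3*Real.sqrt (1 - Λ*(R k (χ₀ k))^2/3)))
      atTop (𝓝 (R₁/(3*uI))) :=
    hrlim.div (tendsto_const_nhds.mul hsqlim) (by positivity)
  -- limit of the master inequality
  have hFlim : Tendsto (fun k =>
      -R₁ * (1 - (deriv (R k) χ₁) ^ 2 - Λ * R₁ ^ 2) - 4 * R₁ * (deriv (R k) χ₁) ^ 2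
      + (deriv (R k) χ₁) * Real.exp (K₃ * (χ₁ - χ₀ k))
        * (R k (χ₀ k) / (3 * Real.sqrt (1 - Λ * (R k (χ₀ k)) ^ 2 / 3))) * (12 - 6 * Λ * (R k (χ₀ k)) ^ 2)
      + (16 * π * C + 4) * (deriv (R k) χ₁)
        * Real.exp (K₃ * (χ₁ - χ₀ k)) * (χ₁ - χ₀ k)) atTop
      (𝓝 (-R₁ * (1 - vI ^ 2 - Λ * R₁ ^ 2) - 4 * R₁ * vI ^ 2
        + vI * 1 * (R₁/(3*uI)) * (12 - 6 * Λ * R₁ ^ 2)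
        + (16 * π * C + 4) * vI * 1 * 0)) := by
    have hvsq := hvlim.pow 2
    refine Tendsto.add (Tendsto.add (Tendsto.sub ?_ ?_) ?_) ?_
    · exact tendsto_const_nhds.mul ((tendsto_const_nhds.sub hvsq).sub tendsto_const_nhds)
    · exact tendsto_const_nhds.mul hvsq
    · exact ((hvlim.mul hexplim).mul hdivlim).mul
        (tendsto_const_nhds.sub (tendsto_const_nhds.mul (hrlim.pow 2)))
    · exact ((tendsto_const_nhds.mul hvlim).mul hexplim).mul hδlim
  have hFI : 0 ≤ -R₁ * (1 - vI ^ 2 - Λ * R₁ ^ 2) - 4 * R₁ * vI ^ 2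
      + vI * 1 * (R₁/(3*uI)) * (12 - 6 * Λ * R₁ ^ 2)
      + (16 * π * C + 4) * vI * 1 * 0 := by
    refine ge_of_tendsto hFlim ?_
    filter_upwards [hkey] with k hk
    exact hk.2
  -- normalize by R₁
  have hEnorm : 0 ≤ -(1 - vI^2 - Λ*R₁^2) - 4*vI^2 + vI*(1/(3*uI))*(12-6*(Λ*R₁^2)) := by
    apply nonneg_factor' hR₁
    have hfact : R₁ * (-(1 - vI^2 - Λ*R₁^2) - 4*vI^2 + vI*(1/(3*uI))*(12-6*(Λ*R₁^2)))
        = -R₁ * (1 - vI ^ 2 - Λ * R₁ ^ 2) - 4 * R₁ * vI ^ 2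
        + vI * 1 * (R₁/(3*uI)) * (12 - 6 * Λ * R₁ ^ 2)
        + (16 * π * C + 4) * vI * 1 * 0 := by
      field_simp
      ring
    rw [hfact]
    exact hFI
  -- final algebra
  have hgoal := final_algebra (Λ*R₁^2) (M/R₁) vI uI (by positivity) hΛR
    (by rw [huinf]) (by rw [hvinf]; congr 1; rw [mul_div_assoc])
    (by rw [← mul_div_assoc]; exact hV0)
    hEnorm
  have hrw : (1:ℝ) + 3*(Λ*R₁^2) = 1 + 3*Λ*R₁^2 := by ring
  rw [hrw] at hgoal
  linarith only [hgoal]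
end

section
/- Let μ ≥ 0 and z > 0 be real numbers with 2μ + z/3 ≤ 1, and set s := √(1 − 2μ − z/3). If μ − z/3 = 2s(1 − s), then (3μ/2 + z/2)² = (2/3)·(3μ/2 + z), and consequently μ = 2/9 − z/3 + (2/9)·√(1 + 3z). -/
open Real

/-- Degenerate case `h = 0` of the thin-shell limit identity: if `μ ≥ 0`,
`z > 0`, `2μ + z/3 ≤ 1`, `s = √(1 − 2μ − z/3)` and `μ − z/3 = 2s(1 − s)`,
then `(3μ/2 + z/2)² = (2/3)(3μ/2 + z)` and `μ = 2/9 − z/3 + (2/9)√(1 + 3z)`. -/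
theorem thin_shell_saturation_case
    (μ z : ℝ) (hμ : 0 ≤ μ) (hz : 0 < z) (h1 : 2 * μ + z / 3 ≤ 1)
    (hid : μ - z / 3 =
      2 * Real.sqrt (1 - 2 * μ - z / 3) * (1 - Real.sqrt (1 - 2 * μ - z / 3))) :
    (3 / 2 * μ + 1 / 2 * z) ^ 2 = 2 / 3 * (3 / 2 * μ + z) ∧
    μ = 2 / 9 - z / 3 + 2 / 9 * Real.sqrt (1 + 3 * z) := by
  set s := Real.sqrt (1 - 2 * μ - z / 3) with hs
  have hnn : 0 ≤ 1 - 2 * μ - z / 3 := by linarith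
  have hs0 : 0 ≤ s := Real.sqrt_nonneg _
  have hs2 : s ^ 2 = 1 - 2 * μ - z / 3 := Real.sq_sqrt hnn
  have hzeq : z = 3 * s ^ 2 - 4 * s + 1 := by nlinarith [hs2, hid]
  have hs13 : s < 1 / 3 := by nlinarith [hs2, hid, hs0]
  have hsqrt : Real.sqrt (1 + 3 * z) = 2 - 3 * s := by
    have : 1 + 3 * z = (2 - 3 * s) ^ 2 := by nlinarith [hzeq]
    rw [this, Real.sqrt_sq (by linarith)]
  constructor
  · nlinarith [hzeq, hid, hs2]
  · rw [hsqrt]; nlinarith [hzeq, hid, hs2]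
end

section
/- Let μ ≥ 0 and z be real numbers with 0 < z < 1 and 2μ + z/3 ≤ 1, and set s := √(1 − 2μ − z/3) and h := z·s/√(1 − z/3). If μ − z/3 = 2s(1 − s) − h, then μ < 2/9 − z/3 + (2/9)·√(1 + 3z). -/
open Real

/-- Algebraic core of the Proposition: if `μ ≥ 0`, `0 < z < 1`, `2μ + z/3 ≤ 1`,
`s = √(1 − 2μ − z/3)`, `h = z·s/√(1 − z/3)` and `μ − z/3 = 2s(1 − s) − h`,
then `μ < 2/9 − z/3 + (2/9)√(1 + 3z)`. -/
theorem thin_shell_strict_inequality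
    (μ z : ℝ) (hμ : 0 ≤ μ) (hz0 : 0 < z) (hz1 : z < 1) (h1 : 2 * μ + z / 3 ≤ 1)
    (hid : μ - z / 3 =
      2 * Real.sqrt (1 - 2 * μ - z / 3) * (1 - Real.sqrt (1 - 2 * μ - z / 3))
        - z * Real.sqrt (1 - 2 * μ - z / 3) / Real.sqrt (1 - z / 3)) :
    μ < 2 / 9 - z / 3 + 2 / 9 * Real.sqrt (1 + 3 * z) := by
  set s := Real.sqrt (1 - 2 * μ - z / 3) with hsdef
  set t := Real.sqrt (1 - z / 3) with htdef
  set w := Real.sqrt (1 + 3 * z) with hwdef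
  have harg : 0 ≤ 1 - 2 * μ - z / 3 := by linarith
  have hs2 : s ^ 2 = 1 - 2 * μ - z / 3 := Real.sq_sqrt harg
  have hsnn : 0 ≤ s := Real.sqrt_nonneg _
  have ht2 : t ^ 2 = 1 - z / 3 := Real.sq_sqrt (by linarith)
  have ht : 0 < t := Real.sqrt_pos.mpr (by linarith)
  have hw2 : w ^ 2 = 1 + 3 * z := Real.sq_sqrt (by linarith)
  have hwnn : 0 ≤ w := Real.sqrt_nonneg _
  have hwlt2 : w < 2 := by nlinarith
  have hspos : 0 < s := by
    rcases hsnn.lt_or_eq with h | h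
    · exact h
    · exfalso
      rw [← h] at hid hs2
      simp at hid
      linarith
  have hq : 0 < z * s / t := div_pos (mul_pos hz0 hspos) ht
  have hkey : 3 * s ^ 2 - 4 * s + (1 - z) = -(2 * (z * s / t)) := by
    linear_combination 2 * hid - hs2
  have hneg : 3 * s ^ 2 - 4 * s + (1 - z) < 0 := by linarith
  have hfinal : 3 * s > 2 - w := by
    by_contra hcon
    push_neg at hcon
    have h2 : 0 ≤ 2 - w - 3 * s := by linarith
    have h3 : 0 ≤ 2 + w - 3 * s := by linarith
    nlinarith [mul_nonneg h2 h3, hw2, hneg]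
  have hsum : 0 < 3 * s + (2 - w) := by linarith
  have hprod := mul_pos (show (0:ℝ) < 3 * s - (2 - w) by linarith) hsum
  nlinarith [hprod, hs2, hw2]
end
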